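/- Let G = (V,E) be a directed mixed graph and suppose α is a potential parent of β in I(G). Let G⁺ be the DMG obtained from G by adding the directed edge α→β. Then I(G⁺) = I(G). -/

import Mathlib

/-!
Directed mixed graphs (DMGs) with μ-separation, following
Mogensen & Hansen, "Markov equivalence of marginalized local independence graphs".
-/

universe u

/-- A directed mixed graph on node set `V`: a set of directed edges (`dir a b`
meaning `a → b`) and a set of bidirected edges (`bi`, a symmetric relation since
bidirected edges are unordered pairs).  Loops are allowed. -/
structure DMG (V : Type u) where
  dir : V → V → Prop
  bi : V → V → Prop
  bi_symm : ∀ a b, bi a b → bi b a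

namespace DMG

variable {V : Type u}

/-- A single step of a walk: an edge instance together with the direction in
which it is traversed (this records, in particular, orientations of loops).
A directed edge has a tail at its source and a head at its target; a bidirected
edge has heads at both endpoints. -/
inductive Step (G : DMG V) : V → V → Type u
  | dirF : ∀ {a b : V}, G.dir a b → Step G a b
  | dirB : ∀ {a b : V}, G.dir b a → Step G a b
  | bid  : ∀ {a b : V}, G.bi a b → Step G a b

/-- Whether the step has a head (edge mark) at its start node. -/
def Step.headStart {G : DMG V} : ∀ {a b : V}, Step G a b → Bool
  | _, _, .dirF _ => false
  | _, _, .dirB _ => true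
  | _, _, .bid _ => true

/-- Whether the step has a head (edge mark) at its end node. -/
def Step.headEnd {G : DMG V} : ∀ {a b : V}, Step G a b → Bool
  | _, _, .dirF _ => true
  | _, _, .dirB _ => false
  | _, _, .bid _ => true

/-- The step traverses a bidirected edge. -/
def Step.IsBid {G : DMG V} {a b : V} : Step G a b → Prop
  | .bid _ => True
  | _ => False

/-- The step traverses a directed edge, forwards. -/
def Step.IsDirF {G : DMG V} {a b : V} : Step G a b → Prop
  | .dirF _ => True
  | _ => False

/-- The underlying edge of a step: a directed edge is the ordered pair
(tail, head); a bidirected edge is the unordered pair of its endpoints. -/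
def Step.edge {G : DMG V} : ∀ {a b : V}, Step G a b → (V × V) ⊕ (Sym2 V)
  | a, b, .dirF _ => Sum.inl (a, b)
  | a, b, .dirB _ => Sum.inl (b, a)
  | a, b, .bid _ => Sum.inr s(a, b)

/-- A walk in a DMG: an alternating sequence of nodes and edges, each edge
between its neighbouring nodes, with a chosen orientation of each edge
(in particular of each directed loop). -/
inductive Walk (G : DMG V) : V → V → Type u
  | nil (a : V) : Walk G a a
  | cons {a b c : V} (s : Step G a b) (w : Walk G b c) : Walk G a c

namespace Walk

variable {G : DMG V}

/-- A nontrivial walk contains at least one edge. -/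
def Nontrivial : ∀ {a b : V}, Walk G a b → Prop
  | _, _, .nil _ => False
  | _, _, .cons _ _ => True

/-- The list of nodes of a walk, in order (with multiplicity). -/
def nodes : ∀ {a b : V}, Walk G a b → List V
  | a, _, .nil _ => [a]
  | a, _, .cons _ w => a :: w.nodes

/-- The non-endpoint (internal) nodes of a walk, in order (with multiplicity). -/
def interior {a b : V} (w : Walk G a b) : List V :=
  (w.nodes.dropLast).drop 1

/-- The list of edges of a walk. -/
def edges : ∀ {a b : V}, Walk G a b → List ((V × V) ⊕ (Sym2 V))
  | _, _, .nil _ => []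
  | _, _, .cons s w => s.edge :: w.edges

/-- Whether the first edge of the walk has a head at the first node
(`false` for a trivial walk). -/
def firstHead : ∀ {a b : V}, Walk G a b → Bool
  | _, _, .nil _ => false
  | _, _, .cons s _ => s.headStart

/-- Whether the last edge of the walk has a head at the last node
(`false` for a trivial walk). -/
def lastHead : ∀ {a b : V}, Walk G a b → Bool
  | _, _, .nil _ => false
  | _, _, .cons s (.nil _) => s.headEnd
  | _, _, .cons _ (.cons t w) => lastHead (Walk.cons t w)

/-- Helper: conditions at all remaining internal node instances of a walk,
where `h` records whether the edge arriving at the current start node has a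
head there.  A node instance is a collider if both adjoining edges have a
head at it; a collider must lie in `Anc`, a noncollider must avoid `C`. -/
def openFrom (C Anc : Set V) : ∀ {a b : V}, Bool → Walk G a b → Prop
  | _, _, _, .nil _ => True
  | a, _, h, .cons s w =>
      (if h && s.headStart then a ∈ Anc else a ∉ C) ∧ openFrom C Anc s.headEnd w

/-- Helper: every remaining internal node instance which is a collider lies in `S`. -/
def collInFrom (S : Set V) : ∀ {a b : V}, Bool → Walk G a b → Prop
  | _, _, _, .nil _ => True
  | a, _, h, .cons s w =>
      ((h && s.headStart) = true → a ∈ S) ∧ collInFrom S s.headEnd w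

/-- Every collider (internal node instance with heads on both sides) of the
walk lies in `S`. -/
def CollidersIn (S : Set V) : ∀ {a b : V}, Walk G a b → Prop
  | _, _, .nil _ => True
  | _, _, .cons s w => collInFrom S s.headEnd w

/-- The walk has no colliders. -/
def NoColliders {a b : V} (w : Walk G a b) : Prop :=
  w.CollidersIn ∅

/-- Helper: every remaining internal node instance is a collider. -/
def allCollFrom : ∀ {a b : V}, Bool → Walk G a b → Prop
  | _, _, _, .nil _ => True
  | _, _, h, .cons s w => (h && s.headStart) = true ∧ allCollFrom s.headEnd w

/-- Every internal node instance of the walk is a collider (no noncolliders). -/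
def AllColliders : ∀ {a b : V}, Walk G a b → Prop
  | _, _, .nil _ => True
  | _, _, .cons s w => allCollFrom s.headEnd w

/-- Every edge of the walk is bidirected. -/
def AllBid : ∀ {a b : V}, Walk G a b → Prop
  | _, _, .nil _ => True
  | _, _, .cons s w => s.IsBid ∧ w.AllBid

/-- The walk consists of a directed first edge (pointing forwards) followed by
bidirected edges only (the form `α → β` or `α → γ₁ ↔ ⋯ ↔ γₙ ↔ β`). -/
def UniForm : ∀ {a b : V}, Walk G a b → Prop
  | _, _, .nil _ => False
  | _, _, .cons s w => s.IsDirF ∧ w.AllBid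

end Walk

/-- `a` is an ancestor of `b`: there is a (possibly trivial) directed path
from `a` to `b`. -/
def anc (G : DMG V) (a b : V) : Prop := Relation.ReflTransGen G.dir a b

/-- The set of ancestors of nodes of `C`. -/
def anSet (G : DMG V) (C : Set V) : Set V := {a | ∃ c ∈ C, G.anc a c}

/-- The walk is μ-connecting given `C`: it is nontrivial, its first node is not
in `C`, every collider lies in `An(C)`, no noncollider lies in `C`, and its
final edge has a head at the final node. -/
def Walk.MuConn {G : DMG V} (C : Set V) : ∀ {a b : V}, Walk G a b → Prop
  | _, _, .nil _ => False
  | a, _, .cons s w =>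
      a ∉ C ∧ Walk.openFrom C (G.anSet C) s.headEnd w ∧ (Walk.cons s w).lastHead = true

/-- `B` is μ-separated from `A` given `C` in `G`: there is no μ-connecting
walk from any node of `A` to any node of `B` given `C`. -/
def muSep (G : DMG V) (A B C : Set V) : Prop :=
  ∀ ⦃a b : V⦄, a ∈ A → b ∈ B → ∀ w : Walk G a b, ¬ w.MuConn C

/-- Two DMGs on the same node set are Markov equivalent: they induce the same
independence model via μ-separation, i.e. `I(G₁) = I(G₂)`. -/
def MarkovEq (G₁ G₂ : DMG V) : Prop :=
  ∀ A B C : Set V, muSep G₁ A B C ↔ muSep G₂ A B C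

/-- `b` is separable from `a` in `I(G)`: there is `C ⊆ V ∖ {a}` with
`⟨{a},{b} | C⟩ ∈ I(G)`. -/
def separable (G : DMG V) (a b : V) : Prop :=
  ∃ C : Set V, a ∉ C ∧ muSep G {a} {b} C

/-- `a ∈ u(b, I(G))`: `b` is inseparable from `a` in `I(G)`. -/
def inU (G : DMG V) (a b : V) : Prop := ¬ G.separable a b

/-- `G₁` is a subgraph of `G₂` (same node set, edge-set inclusion). -/
def Sub (G₁ G₂ : DMG V) : Prop :=
  (∀ a b, G₁.dir a b → G₂.dir a b) ∧ (∀ a b, G₁.bi a b → G₂.bi a b)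

/-- The DMG obtained by adding the directed edge `a → b`. -/
def addDir (G : DMG V) (a b : V) : DMG V where
  dir x y := G.dir x y ∨ (x = a ∧ y = b)
  bi := G.bi
  bi_symm := G.bi_symm

/-- The DMG obtained by adding the bidirected edge `a ↔ b`. -/
def addBi (G : DMG V) (a b : V) : DMG V where
  dir := G.dir
  bi x y := G.bi x y ∨ (x = a ∧ y = b) ∨ (x = b ∧ y = a)
  bi_symm x y h := by
    rcases h with h | h | h
    · exact Or.inl (G.bi_symm _ _ h)
    · exact Or.inr (Or.inr ⟨h.2, h.1⟩)
    · exact Or.inr (Or.inl ⟨h.2, h.1⟩)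

/-- The DMG obtained by removing the directed edge `a → b`. -/
def removeDir (G : DMG V) (a b : V) : DMG V where
  dir x y := G.dir x y ∧ ¬(x = a ∧ y = b)
  bi := G.bi
  bi_symm := G.bi_symm

/-- The DMG obtained by removing the bidirected edge `a ↔ b`. -/
def removeBi (G : DMG V) (a b : V) : DMG V where
  dir := G.dir
  bi x y := G.bi x y ∧ ¬((x = a ∧ y = b) ∨ (x = b ∧ y = a))
  bi_symm x y h := ⟨G.bi_symm _ _ h.1, fun hc => h.2 (by tauto)⟩

/-- The complete DMG: all directed and all bidirected edges present. -/
def IsComplete (G : DMG V) : Prop :=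
  (∀ a b, G.dir a b) ∧ (∀ a b, G.bi a b)

/-- A DMG is maximal if it is complete, or adding any (absent) edge changes the
induced independence model. -/
def IsMaximal (G : DMG V) : Prop :=
  G.IsComplete ∨
    ∀ a b : V, (¬ G.dir a b → ¬ MarkovEq (G.addDir a b) G) ∧
      (¬ G.bi a b → ¬ MarkovEq (G.addBi a b) G)

end DMG
namespace DMG

variable {V : Type u}

/-- An inducing path from `a` to `b`: a nontrivial path or cycle from `a` to
`b` with a head at `b`, with no noncolliders, and on which every node is an
ancestor of `a` or of `b`. -/
def IsInducingPath (G : DMG V) {a b : V} (w : Walk G a b) : Prop :=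
  w.Nontrivial ∧
  (w.nodes.Nodup ∨ (a = b ∧ w.nodes.dropLast.Nodup)) ∧
  w.lastHead = true ∧
  w.AllColliders ∧
  ∀ x ∈ w.nodes, G.anc x a ∨ G.anc x b

/-- A bidirected inducing path: an inducing path all of whose edges are bidirected. -/
def IsBidirectedIP (G : DMG V) {a b : V} (w : Walk G a b) : Prop :=
  G.IsInducingPath w ∧ w.AllBid

/-- A directed inducing path: an inducing path of the form `α → β` or
`α → γ₁ ↔ ⋯ ↔ γₙ ↔ β` with every `γᵢ` an ancestor of `β`. -/
def IsDirectedIP (G : DMG V) {a b : V} (w : Walk G a b) : Prop :=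
  G.IsInducingPath w ∧ w.UniForm ∧ ∀ x ∈ w.interior, G.anc x b

/-- There exists a nontrivial walk in `G` between `x` and `y` with no
colliders, all non-endpoint nodes in `M`, and with edge marks `hs` at `x`
(`true` = head) and `he` at `y`. -/
def ConnThrough (G : DMG V) (M : Set V) (x y : V) (hs he : Bool) : Prop :=
  ∃ w : Walk G x y, w.Nontrivial ∧ w.NoColliders ∧
    (∀ z ∈ w.interior, z ∈ M) ∧ w.firstHead = hs ∧ w.lastHead = he

/-- The latent projection `m(G, O)` of `G` on `O`: the DMG on node set `O`
having an edge (with given endpoint marks) between `α` and `β` if and only if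
`G` contains a nontrivial endpoint-identical walk between `α` and `β` with no
colliders and all non-endpoint nodes in `M = V ∖ O`. -/
def latentProj (G : DMG V) (O : Set V) : DMG {x : V // x ∈ O} where
  dir x y := ConnThrough G Oᶜ x.1 y.1 false true
  bi x y := ConnThrough G Oᶜ x.1 y.1 true true ∨ ConnThrough G Oᶜ y.1 x.1 true true
  bi_symm x y h := h.symm

/-- `x` is directedly collider-connected to `b`: there is a nontrivial walk
from `x` to `b` with a head at `b` on which every non-endpoint node is a
collider. -/
def dirCollConn (G : DMG V) (x b : V) : Prop :=
  ∃ w : Walk G x b, w.Nontrivial ∧ w.AllColliders ∧ w.lastHead = true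

/-- The set `D(a,b)` of nodes in `An({a,b})` directedly collider-connected to
`b`, except `a`. -/
def Dset (G : DMG V) (a b : V) : Set V :=
  {x | x ∈ G.anSet {a, b} ∧ G.dirCollConn x b} \ {a}

/-- `a` and `b` are potential siblings in the independence model `I(G)`. -/
def PotSib (G : DMG V) (a b : V) : Prop :=
  (G.inU b a ∧ G.inU a b) ∧
  (∀ (γ : V) (C : Set V), b ∈ C → muSep G {γ} {a} C → muSep G {γ} {b} C) ∧
  (∀ (γ : V) (C : Set V), a ∈ C → muSep G {γ} {b} C → muSep G {γ} {a} C)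

/-- `a` is a potential parent of `b` in the independence model `I(G)`. -/
def PotPar (G : DMG V) (a b : V) : Prop :=
  G.inU a b ∧
  (∀ (γ : V) (C : Set V), a ∉ C → muSep G {γ} {b} C → muSep G {γ} {a} C) ∧
  (∀ (γ δ : V) (C : Set V), a ∉ C → b ∈ C →
    muSep G {γ} {δ} C → muSep G {γ} {b} C ∨ muSep G {a} {δ} C) ∧
  (∀ (γ : V) (C : Set V), a ∉ C → muSep G {b} {γ} C → muSep G {b} {γ} (C ∪ {a}))

/-- The graph `N(I(G))`: directed edge `a → b` present iff `a` is a potential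
parent of `b` in `I(G)`, bidirected edge `a ↔ b` present iff `a` and `b` are
potential siblings in `I(G)` (potential siblinghood is symmetric). -/
def NGraph (G : DMG V) : DMG V where
  dir a b := G.PotPar a b
  bi a b := G.PotSib a b ∨ G.PotSib b a
  bi_symm _ _ h := h.symm

/-- A path is m-connecting given `C` if it is a path (no repeated nodes), no
noncollider on it is in `C` and every collider on it is in `An(C)`. -/
def Walk.MConn {G : DMG V} (C : Set V) : ∀ {a b : V}, Walk G a b → Prop
  | _, _, .nil _ => True
  | _, _, .cons s w =>
      (Walk.cons s w).nodes.Nodup ∧ Walk.openFrom C (G.anSet C) s.headEnd w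

/-- `A` and `B` are m-separated by `C`: there is no m-connecting path between
a node of `A` and a node of `B` given `C`. -/
def mSep (G : DMG V) (A B C : Set V) : Prop :=
  ∀ ⦃a b : V⦄, a ∈ A → b ∈ B →
    (∀ w : Walk G a b, ¬ w.MConn C) ∧ (∀ w : Walk G b a, ¬ w.MConn C)

/-- Auxiliary directed-edge relation of the `B`-history version of `G`. -/
def histDir (G : DMG V) (B : Set V) : (V ⊕ {x : V // x ∈ B}) → (V ⊕ {x : V // x ∈ B}) → Prop
  | .inl u, .inl v => G.dir u v
  | .inl u, .inr v => G.dir u v.1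
  | _, _ => False

/-- Auxiliary bidirected-edge relation of the `B`-history version of `G`. -/
def histBi (G : DMG V) (B : Set V) : (V ⊕ {x : V // x ∈ B}) → (V ⊕ {x : V // x ∈ B}) → Prop
  | .inl u, .inl v => G.bi u v
  | .inl u, .inr v => G.bi u v.1
  | .inr u, .inl v => G.bi u.1 v
  | .inr _, .inr _ => False

/-- The `B`-history version `G(B)` of `G`: node set `V ⊔ Bᵖ`, whose subgraph
on `V` is `G`, with additionally `α ↔ βᵖ` whenever `α ↔ β` in `G` and
`α → βᵖ` whenever `α → β` in `G` (for `α ∈ V`, `β ∈ B`). -/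
def hist (G : DMG V) (B : Set V) : DMG (V ⊕ {x : V // x ∈ B}) where
  dir := G.histDir B
  bi := G.histBi B
  bi_symm x y h := by
    cases x <;> cases y <;>
      simp only [histBi] at h ⊢ <;>
      first
        | exact G.bi_symm _ _ h
        | exact h

end DMG
/-! ### Auxiliary infrastructure for the proof of Statement 15 -/

namespace DMG

variable {V : Type u}

/-- Reversal of a step. -/
def Step.rev {G : DMG V} : ∀ {x y : V}, Step G x y → Step G y x
  | _, _, .dirF h => .dirB h
  | _, _, .dirB h => .dirF h
  | _, _, .bid h => .bid (G.bi_symm _ _ h)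

@[simp] lemma Step.rev_headStart {G : DMG V} {x y : V} (s : Step G x y) :
    s.rev.headStart = s.headEnd := by cases s <;> rfl

@[simp] lemma Step.rev_headEnd {G : DMG V} {x y : V} (s : Step G x y) :
    s.rev.headEnd = s.headStart := by cases s <;> rfl

@[simp] lemma Step.headStart_dirF {G : DMG V} {x y : V} (e : G.dir x y) :
    (Step.dirF e).headStart = false := rfl
@[simp] lemma Step.headStart_dirB {G : DMG V} {x y : V} (e : G.dir y x) :
    (Step.dirB e : Step G x y).headStart = true := rfl
@[simp] lemma Step.headStart_bid {G : DMG V} {x y : V} (e : G.bi x y) :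
    (Step.bid e).headStart = true := rfl
@[simp] lemma Step.headEnd_dirF {G : DMG V} {x y : V} (e : G.dir x y) :
    (Step.dirF e).headEnd = true := rfl
@[simp] lemma Step.headEnd_dirB {G : DMG V} {x y : V} (e : G.dir y x) :
    (Step.dirB e : Step G x y).headEnd = false := rfl
@[simp] lemma Step.headEnd_bid {G : DMG V} {x y : V} (e : G.bi x y) :
    (Step.bid e).headEnd = true := rfl

namespace Walk

variable {G : DMG V}

/-- Concatenation of walks. -/
def append : ∀ {x y z : V}, Walk G x y → Walk G y z → Walk G x z
  | _, _, _, .nil _, w₂ => w₂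
  | _, _, _, .cons s w, w₂ => .cons s (append w w₂)

@[simp] lemma nil_append {x y : V} (w : Walk G x y) : (Walk.nil x).append w = w := rfl

@[simp] lemma cons_append {x m y z : V} (s : Step G x m) (w : Walk G m y) (w₂ : Walk G y z) :
    (Walk.cons s w).append w₂ = Walk.cons s (w.append w₂) := rfl

/-- The mark at the end of a walk, where `h` is the incoming mark if the
walk is trivial. -/
def chainMark : ∀ {x y : V}, Bool → Walk G x y → Bool
  | _, _, h, .nil _ => h
  | _, _, _, .cons s w => chainMark s.headEnd w

@[simp] lemma chainMark_nil {x : V} (h : Bool) : chainMark h (Walk.nil (G := G) x) = h := rfl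

@[simp] lemma chainMark_cons {x m y : V} (h : Bool) (s : Step G x m) (w : Walk G m y) :
    chainMark h (Walk.cons s w) = chainMark s.headEnd w := rfl

lemma lastHead_eq_chainMark : ∀ {x y : V} (w : Walk G x y) (h : Bool),
    w.lastHead = chainMark false w
  | _, _, .nil _, _ => rfl
  | _, _, .cons s (.nil _), _ => rfl
  | _, _, .cons s (.cons t w), h => by
      show (Walk.cons t w).lastHead = chainMark t.headEnd w
      rw [lastHead_eq_chainMark (Walk.cons t w) h]; rfl

lemma lastHead_cons {x m y : V} (s : Step G x m) (w : Walk G m y) :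
    (Walk.cons s w).lastHead = chainMark s.headEnd w := by
  rw [lastHead_eq_chainMark _ false]; rfl

lemma chainMark_of_nontrivial : ∀ {x y : V} (w : Walk G x y), w.Nontrivial →
    ∀ h : Bool, chainMark h w = w.lastHead
  | _, _, .nil _, hw, _ => hw.elim
  | _, _, .cons s w, _, h => by rw [chainMark_cons, lastHead_cons]

lemma chainMark_append : ∀ {x y z : V} (w₁ : Walk G x y) (w₂ : Walk G y z) (h : Bool),
    chainMark h (w₁.append w₂) = chainMark (chainMark h w₁) w₂
  | _, _, _, .nil _, w₂, h => rfl
  | _, _, _, .cons s w, w₂, h => by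
      rw [cons_append, chainMark_cons, chainMark_cons, chainMark_append]

lemma lastHead_append {x y z : V} (w₁ : Walk G x y) (w₂ : Walk G y z) :
    (w₁.append w₂).lastHead = chainMark w₁.lastHead w₂ := by
  rw [lastHead_eq_chainMark _ false, chainMark_append, ← lastHead_eq_chainMark _ false]

lemma lastHead_append_nontrivial {x y z : V} (w₁ : Walk G x y) (w₂ : Walk G y z)
    (h : w₂.Nontrivial) : (w₁.append w₂).lastHead = w₂.lastHead := by
  rw [lastHead_append, chainMark_of_nontrivial _ h]

@[simp] lemma nontrivial_cons {x m y : V} (s : Step G x m) (w : Walk G m y) :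
    (Walk.cons s w).Nontrivial := trivial

lemma nontrivial_append_left {x y z : V} (w₁ : Walk G x y) (w₂ : Walk G y z)
    (h : w₁.Nontrivial) : (w₁.append w₂).Nontrivial := by
  cases w₁ with
  | nil => exact h.elim
  | cons s w => exact trivial

lemma nontrivial_append_right {x y z : V} (w₁ : Walk G x y) (w₂ : Walk G y z)
    (h : w₂.Nontrivial) : (w₁.append w₂).Nontrivial := by
  cases w₁ with
  | nil => exact h
  | cons s w => exact trivial

@[simp] lemma lastHead_nil (x : V) : (Walk.nil (G := G) x).lastHead = false := rfl

@[simp] lemma firstHead_nil (x : V) : (Walk.nil (G := G) x).firstHead = false := rfl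

@[simp] lemma firstHead_cons {x m y : V} (s : Step G x m) (w : Walk G m y) :
    (Walk.cons s w).firstHead = s.headStart := rfl

lemma firstHead_append_nontrivial {x y z : V} (w₁ : Walk G x y) (w₂ : Walk G y z)
    (h : w₁.Nontrivial) : (w₁.append w₂).firstHead = w₁.firstHead := by
  cases w₁ with
  | nil => exact h.elim
  | cons s w => rfl

@[simp] lemma openFrom_nil {C A : Set V} {x : V} (h : Bool) :
    openFrom (G := G) C A h (Walk.nil x) ↔ True := Iff.rfl

lemma openFrom_cons {C A : Set V} {x m y : V} (h : Bool) (s : Step G x m) (w : Walk G m y) :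
    openFrom C A h (Walk.cons s w) ↔
      (if (h && s.headStart) = true then x ∈ A else x ∉ C) ∧ openFrom C A s.headEnd w := by
  rfl

lemma openFrom_append {C A : Set V} : ∀ {x y z : V} (w₁ : Walk G x y) (w₂ : Walk G y z) (h : Bool),
    openFrom C A h (w₁.append w₂) ↔ openFrom C A h w₁ ∧ openFrom C A (chainMark h w₁) w₂
  | _, _, _, .nil _, w₂, h => by simp [openFrom]
  | _, _, _, .cons s w, w₂, h => by
      rw [cons_append, openFrom_cons, openFrom_cons, openFrom_append, chainMark_cons, and_assoc]

/-- All internal-node conditions of a walk (colliders in `A`, noncolliders not in `C`). -/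
def intOK (C A : Set V) : ∀ {x y : V}, Walk G x y → Prop
  | _, _, .nil _ => True
  | _, _, .cons s w => openFrom C A s.headEnd w

@[simp] lemma intOK_nil {C A : Set V} {x : V} : intOK C A (Walk.nil (G := G) x) ↔ True := Iff.rfl

@[simp] lemma intOK_cons {C A : Set V} {x m y : V} (s : Step G x m) (w : Walk G m y) :
    intOK C A (Walk.cons s w) ↔ openFrom C A s.headEnd w := Iff.rfl

lemma muConn_iff {C : Set V} {x y : V} (w : Walk G x y) :
    w.MuConn C ↔ w.Nontrivial ∧ x ∉ C ∧ intOK C (G.anSet C) w ∧ w.lastHead = true := by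
  cases w with
  | nil => simp [MuConn, Nontrivial]
  | cons s w =>
      constructor
      · rintro ⟨h1, h2, h3⟩
        exact ⟨trivial, h1, h2, h3⟩
      · rintro ⟨-, h1, h2, h3⟩
        exact ⟨h1, h2, h3⟩

/-- Rebuild `openFrom` from `intOK` plus conditions on the first node. -/
lemma openFrom_of_intOK {C A : Set V} {x y : V} (w : Walk G x y) (h : Bool)
    (hw : intOK C A w)
    (h1 : (h && w.firstHead) = true → x ∈ A)
    (h2 : ¬ (h && w.firstHead) = true → x ∉ C) :
    openFrom C A h w := by
  cases w with
  | nil => trivial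
  | cons s w =>
      rw [openFrom_cons]
      refine ⟨?_, hw⟩
      rw [firstHead_cons] at h1 h2
      split
      · exact h1 ‹_›
      · exact h2 ‹_›

lemma intOK_of_openFrom {C A : Set V} {x y : V} (w : Walk G x y) (h : Bool)
    (hw : openFrom C A h w) : intOK C A w := by
  cases w with
  | nil => trivial
  | cons s w => exact ((openFrom_cons _ _ _).1 hw).2

lemma head_mem_of_openFrom {C A : Set V} {x m y : V} {s : Step G x m} {w : Walk G m y} {h : Bool}
    (hw : openFrom C A h (Walk.cons s w)) (hh : (h && s.headStart) = true) : x ∈ A := by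
  have := ((openFrom_cons _ _ _).1 hw).1
  rwa [if_pos hh] at this

lemma head_not_mem_of_openFrom {C A : Set V} {x m y : V} {s : Step G x m} {w : Walk G m y}
    {h : Bool} (hw : openFrom C A h (Walk.cons s w)) (hh : ¬ (h && s.headStart) = true) :
    x ∉ C := by
  have := ((openFrom_cons _ _ _).1 hw).1
  rwa [if_neg hh] at this

lemma intOK_append_left {C A : Set V} {x y z : V} (w₁ : Walk G x y) (w₂ : Walk G y z)
    (h1 : w₁.Nontrivial) :
    intOK C A (w₁.append w₂) ↔ intOK C A w₁ ∧ openFrom C A w₁.lastHead w₂ := by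
  cases w₁ with
  | nil => exact h1.elim
  | cons s w =>
      rw [cons_append, intOK_cons, intOK_cons, openFrom_append, lastHead_cons]

lemma openFrom_mono {C A A' : Set V} (hA : A ⊆ A') :
    ∀ {x y : V} (w : Walk G x y) (h : Bool), openFrom C A h w → openFrom C A' h w
  | _, _, .nil _, _, _ => trivial
  | _, _, .cons s w, h, hw => by
      rw [openFrom_cons] at hw ⊢
      obtain ⟨h1, h2⟩ := hw
      refine ⟨?_, openFrom_mono hA w _ h2⟩
      by_cases hc : (h && s.headStart) = true
      · rw [if_pos hc] at h1 ⊢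
        exact hA h1
      · rw [if_neg hc] at h1 ⊢
        exact h1

lemma intOK_mono {C A A' : Set V} (hA : A ⊆ A') {x y : V} (w : Walk G x y) :
    intOK C A w → intOK C A' w := by
  cases w with
  | nil => exact fun h => h
  | cons s w => exact openFrom_mono hA w _

end Walk
end DMG
namespace DMG
namespace Walk

variable {V : Type u} {G : DMG V}

/-- Reversal of a walk. -/
def reverse : ∀ {x y : V}, Walk G x y → Walk G y x
  | _, _, .nil x => .nil x
  | _, _, .cons s w => (reverse w).append (.cons s.rev (.nil _))

lemma nontrivial_reverse : ∀ {x y : V} (w : Walk G x y), w.Nontrivial → w.reverse.Nontrivial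
  | _, _, .cons s w, _ => nontrivial_append_right _ _ trivial

lemma lastHead_reverse : ∀ {x y : V} (w : Walk G x y), w.reverse.lastHead = w.firstHead
  | _, _, .nil _ => rfl
  | _, _, .cons s w => by
      show ((reverse w).append (.cons s.rev (.nil _))).lastHead = _
      rw [lastHead_append, chainMark_cons, chainMark_nil, Step.rev_headEnd, firstHead_cons]

lemma firstHead_reverse : ∀ {x y : V} (w : Walk G x y), w.reverse.firstHead = w.lastHead
  | _, _, .nil _ => rfl
  | _, _, .cons s (.nil _) => by
      show (Walk.cons s.rev (Walk.nil _)).firstHead = _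
      rw [firstHead_cons, Step.rev_headStart]
      rfl
  | _, _, .cons s (.cons t w) => by
      show (((reverse (Walk.cons t w)).append _)).firstHead = _
      rw [firstHead_append_nontrivial _ _ (nontrivial_reverse (Walk.cons t w) trivial),
        firstHead_reverse (Walk.cons t w)]
      rfl

/-- All nodes of a walk except the last one differ from `z`. -/
def noNode (z : V) : ∀ {x y : V}, Walk G x y → Prop
  | _, _, .nil _ => True
  | x, _, .cons _ w => x ≠ z ∧ noNode z w

@[simp] lemma noNode_nil {z x : V} : noNode (G := G) z (Walk.nil x) ↔ True := Iff.rfl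

@[simp] lemma noNode_cons {z x m y : V} (s : Step G x m) (w : Walk G m y) :
    noNode z (Walk.cons s w) ↔ x ≠ z ∧ noNode z w := Iff.rfl

lemma noNode_append {z : V} : ∀ {x y u : V} (w₁ : Walk G x y) (w₂ : Walk G y u),
    noNode z (w₁.append w₂) ↔ noNode z w₁ ∧ noNode z w₂
  | _, _, _, .nil _, w₂ => by simp
  | _, _, _, .cons s w, w₂ => by
      rw [cons_append, noNode_cons, noNode_cons, noNode_append, and_assoc]

/-- No internal node of the walk equals `z`. -/
def intAvoid (z : V) : ∀ {x y : V}, Walk G x y → Prop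
  | _, _, .nil _ => True
  | _, _, .cons _ w => noNode z w

@[simp] lemma intAvoid_nil {z x : V} : intAvoid (G := G) z (Walk.nil x) ↔ True := Iff.rfl

@[simp] lemma intAvoid_cons {z x m y : V} (s : Step G x m) (w : Walk G m y) :
    intAvoid z (Walk.cons s w) ↔ noNode z w := Iff.rfl

lemma noNode_iff_intAvoid {z : V} : ∀ {x y : V} (w : Walk G x y),
    noNode z w ↔ intAvoid z w ∧ (w.Nontrivial → x ≠ z)
  | _, _, .nil _ => by simp [Nontrivial]
  | _, _, .cons s w => by
      simp only [noNode_cons, intAvoid_cons, nontrivial_cons]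
      tauto

lemma intAvoid_append_single {z : V} {x y u : V} (w : Walk G x y) (t : Step G y u) :
    intAvoid z (w.append (.cons t (.nil _))) ↔ intAvoid z w ∧ (w.Nontrivial → y ≠ z) := by
  cases w with
  | nil => simp [Nontrivial]
  | cons s w =>
      rw [cons_append, intAvoid_cons, noNode_append, noNode_cons, noNode_nil, intAvoid_cons]
      constructor
      · rintro ⟨h1, h2, -⟩; exact ⟨h1, fun _ => h2⟩
      · rintro ⟨h1, h2⟩; exact ⟨h1, h2 trivial, trivial⟩

lemma intAvoid_reverse {z : V} : ∀ {x y : V} (w : Walk G x y),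
    intAvoid z w.reverse ↔ intAvoid z w
  | _, _, .nil _ => Iff.rfl
  | _, _, .cons s w => by
      show intAvoid z ((reverse w).append _) ↔ _
      rw [intAvoid_append_single, intAvoid_reverse w, intAvoid_cons, noNode_iff_intAvoid]
      constructor
      · rintro ⟨h1, h2⟩
        refine ⟨h1, fun hw => h2 (nontrivial_reverse _ hw)⟩
      · rintro ⟨h1, h2⟩
        refine ⟨h1, fun hw => h2 ?_⟩
        cases w with
        | nil => simp [reverse, Nontrivial] at hw
        | cons t v => trivial

/-- intOK is stable under reversal. -/
lemma intOK_reverse {C A : Set V} : ∀ {x y : V} (w : Walk G x y),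
    intOK C A w.reverse ↔ intOK C A w
  | _, _, .nil _ => Iff.rfl
  | _, _, .cons s w => by
      show intOK C A ((reverse w).append (.cons s.rev (.nil _))) ↔ openFrom C A s.headEnd w
      cases w with
      | nil => simp [reverse, intOK, openFrom]
      | cons t v =>
          rw [intOK_append_left _ _ (nontrivial_reverse (Walk.cons t v) trivial)]
          rw [intOK_reverse (Walk.cons t v), lastHead_reverse, firstHead_cons]
          rw [openFrom_cons (G := G) s.headEnd t v, intOK_cons]
          constructor
          · rintro ⟨h1, h2⟩
            rw [openFrom_cons] at h2
            obtain ⟨h2, -⟩ := h2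
            rw [Step.rev_headStart, Bool.and_comm] at h2
            exact ⟨h2, h1⟩
          · rintro ⟨h1, h2⟩
            refine ⟨h2, ?_⟩
            rw [openFrom_cons]
            refine ⟨?_, trivial⟩
            rw [Step.rev_headStart, Bool.and_comm]
            exact h1

end Walk

/-- Mapping steps along a subgraph inclusion. -/
def Step.mapSub {G₁ G₂ : DMG V} (hs : G₁.Sub G₂) : ∀ {x y : V}, Step G₁ x y → Step G₂ x y
  | _, _, .dirF h => .dirF (hs.1 _ _ h)
  | _, _, .dirB h => .dirB (hs.1 _ _ h)
  | _, _, .bid h => .bid (hs.2 _ _ h)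

@[simp] lemma Step.mapSub_headStart {G₁ G₂ : DMG V} (hs : G₁.Sub G₂) {x y : V} (s : Step G₁ x y) :
    (s.mapSub hs).headStart = s.headStart := by cases s <;> rfl

@[simp] lemma Step.mapSub_headEnd {G₁ G₂ : DMG V} (hs : G₁.Sub G₂) {x y : V} (s : Step G₁ x y) :
    (s.mapSub hs).headEnd = s.headEnd := by cases s <;> rfl

namespace Walk

/-- Mapping walks along a subgraph inclusion. -/
def mapSub {G₁ G₂ : DMG V} (hs : G₁.Sub G₂) : ∀ {x y : V}, Walk G₁ x y → Walk G₂ x y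
  | _, _, .nil x => .nil x
  | _, _, .cons s w => .cons (s.mapSub hs) (mapSub hs w)

variable {G₁ G₂ : DMG V} (hs : G₁.Sub G₂)

@[simp] lemma mapSub_nil (x : V) : mapSub hs (Walk.nil (G := G₁) x) = .nil x := rfl

@[simp] lemma mapSub_cons {x m y : V} (s : Step G₁ x m) (w : Walk G₁ m y) :
    mapSub hs (Walk.cons s w) = .cons (s.mapSub hs) (mapSub hs w) := rfl

lemma mapSub_append : ∀ {x y z : V} (w₁ : Walk G₁ x y) (w₂ : Walk G₁ y z),
    mapSub hs (w₁.append w₂) = (mapSub hs w₁).append (mapSub hs w₂)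
  | _, _, _, .nil _, w₂ => rfl
  | _, _, _, .cons s w, w₂ => by rw [cons_append, mapSub_cons, mapSub_cons, mapSub_append, cons_append]

lemma nontrivial_mapSub : ∀ {x y : V} (w : Walk G₁ x y), w.Nontrivial → (mapSub hs w).Nontrivial
  | _, _, .cons _ _, _ => trivial

lemma nontrivial_of_mapSub : ∀ {x y : V} (w : Walk G₁ x y), (mapSub hs w).Nontrivial → w.Nontrivial
  | _, _, .cons _ _, _ => trivial
  | _, _, .nil _, h => h.elim

lemma chainMark_mapSub : ∀ {x y : V} (w : Walk G₁ x y) (h : Bool),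
    chainMark h (mapSub hs w) = chainMark h w
  | _, _, .nil _, h => rfl
  | _, _, .cons s w, h => by
      rw [mapSub_cons, chainMark_cons, chainMark_cons, Step.mapSub_headEnd, chainMark_mapSub]

lemma lastHead_mapSub {x y : V} (w : Walk G₁ x y) : (mapSub hs w).lastHead = w.lastHead := by
  rw [lastHead_eq_chainMark _ false, lastHead_eq_chainMark w false, chainMark_mapSub]

lemma firstHead_mapSub {x y : V} (w : Walk G₁ x y) : (mapSub hs w).firstHead = w.firstHead := by
  cases w with
  | nil => rfl
  | cons s w => rw [mapSub_cons, firstHead_cons, firstHead_cons, Step.mapSub_headStart]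

lemma openFrom_mapSub {C A : Set V} : ∀ {x y : V} (w : Walk G₁ x y) (h : Bool),
    openFrom C A h (mapSub hs w) ↔ openFrom C A h w
  | _, _, .nil _, h => Iff.rfl
  | _, _, .cons s w, h => by
      rw [mapSub_cons, openFrom_cons, openFrom_cons, Step.mapSub_headStart, Step.mapSub_headEnd,
        openFrom_mapSub]

lemma intOK_mapSub {C A : Set V} {x y : V} (w : Walk G₁ x y) :
    intOK C A (mapSub hs w) ↔ intOK C A w := by
  cases w with
  | nil => exact Iff.rfl
  | cons s w => rw [mapSub_cons, intOK_cons, intOK_cons, Step.mapSub_headEnd, openFrom_mapSub]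

lemma noNode_mapSub {z : V} : ∀ {x y : V} (w : Walk G₁ x y),
    noNode z (mapSub hs w) ↔ noNode z w
  | _, _, .nil _ => Iff.rfl
  | _, _, .cons s w => by rw [mapSub_cons, noNode_cons, noNode_cons, noNode_mapSub]

lemma intAvoid_mapSub {z : V} {x y : V} (w : Walk G₁ x y) :
    intAvoid z (mapSub hs w) ↔ intAvoid z w := by
  cases w with
  | nil => exact Iff.rfl
  | cons s w => rw [mapSub_cons, intAvoid_cons, intAvoid_cons, noNode_mapSub]

end Walk

lemma anc_mono {G₁ G₂ : DMG V} (hs : G₁.Sub G₂) {x y : V} (h : G₁.anc x y) : G₂.anc x y :=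
  Relation.ReflTransGen.mono hs.1 x y h

lemma anSet_mono {G₁ G₂ : DMG V} (hs : G₁.Sub G₂) {C : Set V} : G₁.anSet C ⊆ G₂.anSet C := by
  rintro x ⟨c, hc, h⟩; exact ⟨c, hc, anc_mono hs h⟩

lemma anSet_mono_set {G : DMG V} {C C' : Set V} (h : C ⊆ C') : G.anSet C ⊆ G.anSet C' := by
  rintro x ⟨c, hc, hx⟩; exact ⟨c, h hc, hx⟩

lemma subset_anSet {G : DMG V} {C : Set V} : C ⊆ G.anSet C :=
  fun c hc => ⟨c, hc, Relation.ReflTransGen.refl⟩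

lemma Walk.muConn_mapSub {G₁ G₂ : DMG V} (hs : G₁.Sub G₂) {C : Set V} {x y : V}
    (w : Walk G₁ x y) (hw : w.MuConn C) : (w.mapSub hs).MuConn C := by
  rw [muConn_iff] at hw ⊢
  obtain ⟨h1, h2, h3, h4⟩ := hw
  refine ⟨nontrivial_mapSub hs w h1, h2, ?_, by rwa [lastHead_mapSub]⟩
  rw [intOK_mapSub]
  exact intOK_mono (anSet_mono hs) w h3

lemma addDir_dir_new (G : DMG V) (a b : V) : (G.addDir a b).dir a b := Or.inr ⟨rfl, rfl⟩

lemma sub_addDir (G : DMG V) (a b : V) : G.Sub (G.addDir a b) :=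
  ⟨fun _ _ h => Or.inl h, fun _ _ h => h⟩

lemma muSep_mono {G₁ G₂ : DMG V} (hs : G₁.Sub G₂) {A B C : Set V}
    (h : G₂.muSep A B C) : G₁.muSep A B C := by
  intro x y hx hy w hw
  exact h hx hy _ (Walk.muConn_mapSub hs w hw)

lemma muSep_singleton_not_iff {G : DMG V} {x y : V} {C : Set V} :
    ¬ G.muSep {x} {y} C ↔ ∃ w : Walk G x y, w.MuConn C := by
  constructor
  · intro h
    by_contra hne
    push_neg at hne
    refine h ?_
    rintro p q rfl rfl w hw
    exact hne w hw
  · rintro ⟨w, hw⟩ hsep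
    exact hsep rfl rfl w hw

end DMG
namespace DMG

variable {V : Type u}

/-- The step traverses a directed edge backwards. -/
def Step.IsDirB {G : DMG V} {x y : V} : Step G x y → Prop
  | .dirB _ => True
  | _ => False

namespace Walk

/-- Length of a walk. -/
def length {G : DMG V} : ∀ {x y : V}, Walk G x y → ℕ
  | _, _, .nil _ => 0
  | _, _, .cons _ w => length w + 1

variable {G : DMG V}

@[simp] lemma length_nil {x : V} : (Walk.nil (G := G) x).length = 0 := rfl

@[simp] lemma length_cons {x m y : V} (s : Step G x m) (w : Walk G m y) :
    (Walk.cons s w).length = w.length + 1 := rfl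

open Classical in
/-- Number of forward traversals of the (new) edge `a → b`. -/
noncomputable def Fcnt (a b : V) : ∀ {x y : V}, Walk G x y → ℕ
  | _, _, .nil _ => 0
  | _, _, @Walk.cons _ _ x m _ s w =>
      (if s.IsDirF ∧ x = a ∧ m = b then 1 else 0) + Fcnt a b w

open Classical in
/-- Number of backward traversals of the (new) edge `a → b`. -/
noncomputable def Bcnt (a b : V) : ∀ {x y : V}, Walk G x y → ℕ
  | _, _, .nil _ => 0
  | _, _, @Walk.cons _ _ x m _ s w =>
      (if s.IsDirB ∧ x = b ∧ m = a then 1 else 0) + Bcnt a b w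

open Classical in
/-- Number of remaining collider instances outside of `S`, given incoming mark `h`. -/
noncomputable def badcnt (S : Set V) : ∀ {x y : V}, Bool → Walk G x y → ℕ
  | _, _, _, .nil _ => 0
  | x, _, h, .cons s w =>
      (if (h && s.headStart) = true ∧ x ∉ S then 1 else 0) + badcnt S s.headEnd w

/-- Number of collider instances of the walk outside of `S`. -/
noncomputable def badW (S : Set V) : ∀ {x y : V}, Walk G x y → ℕ
  | _, _, .nil _ => 0
  | _, _, .cons s w => badcnt S s.headEnd w

@[simp] lemma Fcnt_nil {a b x : V} : Fcnt (G := G) a b (Walk.nil x) = 0 := rfl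
@[simp] lemma Bcnt_nil {a b x : V} : Bcnt (G := G) a b (Walk.nil x) = 0 := rfl
@[simp] lemma badcnt_nil {S : Set V} {h : Bool} {x : V} : badcnt (G := G) S h (Walk.nil x) = 0 := rfl
@[simp] lemma badW_nil {S : Set V} {x : V} : badW (G := G) S (Walk.nil x) = 0 := rfl
@[simp] lemma badW_cons {S : Set V} {x m y : V} (s : Step G x m) (w : Walk G m y) :
    badW S (Walk.cons s w) = badcnt S s.headEnd w := rfl

open Classical in
lemma Fcnt_cons {a b x m y : V} (s : Step G x m) (w : Walk G m y) :
    Fcnt a b (Walk.cons s w) = (if s.IsDirF ∧ x = a ∧ m = b then 1 else 0) + Fcnt a b w := by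
  simp [Fcnt]

open Classical in
lemma Bcnt_cons {a b x m y : V} (s : Step G x m) (w : Walk G m y) :
    Bcnt a b (Walk.cons s w) = (if s.IsDirB ∧ x = b ∧ m = a then 1 else 0) + Bcnt a b w := by
  simp [Bcnt]

open Classical in
lemma badcnt_cons {S : Set V} {h : Bool} {x m y : V} (s : Step G x m) (w : Walk G m y) :
    badcnt S h (Walk.cons s w) =
      (if (h && s.headStart) = true ∧ x ∉ S then 1 else 0) + badcnt S s.headEnd w := by
  simp [badcnt]

lemma Fcnt_append {a b : V} : ∀ {x y z : V} (w₁ : Walk G x y) (w₂ : Walk G y z),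
    Fcnt a b (w₁.append w₂) = Fcnt a b w₁ + Fcnt a b w₂
  | _, _, _, .nil _, w₂ => by simp
  | _, _, _, .cons s w, w₂ => by
      rw [cons_append, Fcnt_cons, Fcnt_cons, Fcnt_append]; omega

lemma Bcnt_append {a b : V} : ∀ {x y z : V} (w₁ : Walk G x y) (w₂ : Walk G y z),
    Bcnt a b (w₁.append w₂) = Bcnt a b w₁ + Bcnt a b w₂
  | _, _, _, .nil _, w₂ => by simp
  | _, _, _, .cons s w, w₂ => by
      rw [cons_append, Bcnt_cons, Bcnt_cons, Bcnt_append]; omega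

lemma badcnt_append {S : Set V} : ∀ {x y z : V} (w₁ : Walk G x y) (w₂ : Walk G y z) (h : Bool),
    badcnt S h (w₁.append w₂) = badcnt S h w₁ + badcnt S (chainMark h w₁) w₂
  | _, _, _, .nil _, w₂, h => by simp
  | _, _, _, .cons s w, w₂, h => by
      rw [cons_append, badcnt_cons, badcnt_cons, badcnt_append, chainMark_cons]; omega

lemma badW_append_left {S : Set V} {x y z : V} (w₁ : Walk G x y) (w₂ : Walk G y z)
    (h : w₁.Nontrivial) :
    badW S (w₁.append w₂) = badW S w₁ + badcnt S w₁.lastHead w₂ := by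
  cases w₁ with
  | nil => exact h.elim
  | cons s w => rw [cons_append, badW_cons, badW_cons, badcnt_append, lastHead_cons]

open Classical in
lemma badcnt_eq_badW {S : Set V} {h : Bool} {x y : V} (w : Walk G x y) (hw : w.Nontrivial) :
    badcnt S h w =
      (if (h && w.firstHead) = true ∧ x ∉ S then 1 else 0) + badW S w := by
  cases w with
  | nil => exact hw.elim
  | cons s w => rw [badcnt_cons, badW_cons, firstHead_cons]

lemma badcnt_zero_of_openFrom {C S : Set V} : ∀ {x y : V} (w : Walk G x y) (h : Bool),
    openFrom C S h w → badcnt S h w = 0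
  | _, _, .nil _, _, _ => rfl
  | _, _, .cons s w, h, hw => by
      rw [openFrom_cons] at hw
      rw [badcnt_cons, badcnt_zero_of_openFrom w _ hw.2]
      have := hw.1
      by_cases hc : (h && s.headStart) = true
      · rw [if_pos hc] at this
        rw [if_neg (by tauto)]
      · rw [if_neg (by tauto)]

lemma openFrom_switch {C A S : Set V} : ∀ {x y : V} (w : Walk G x y) (h : Bool),
    openFrom C A h w → badcnt S h w = 0 → openFrom C S h w
  | _, _, .nil _, _, _, _ => trivial
  | _, _, .cons s w, h, hw, hb => by
      rw [openFrom_cons] at hw ⊢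
      rw [badcnt_cons] at hb
      have h2 : badcnt S s.headEnd w = 0 := by omega
      refine ⟨?_, openFrom_switch w _ hw.2 h2⟩
      have h1 := hw.1
      by_cases hc : (h && s.headStart) = true
      · rw [if_pos hc] at h1 ⊢
        by_contra hxS
        rw [if_pos ⟨hc, hxS⟩] at hb
        omega
      · rwa [if_neg hc] at h1 ⊢

lemma openFrom_insert {C A A' : Set V} {z : V} (hA : A ⊆ A') :
    ∀ {x y : V} (w : Walk G x y) (h : Bool),
    openFrom C A h w → noNode z w → openFrom (C ∪ {z}) A' h w
  | _, _, .nil _, _, _, _ => trivial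
  | x, _, .cons s w, h, hw, hz => by
      rw [openFrom_cons] at hw ⊢
      rw [noNode_cons] at hz
      refine ⟨?_, openFrom_insert hA w _ hw.2 hz.2⟩
      have h1 := hw.1
      by_cases hc : (h && s.headStart) = true
      · rw [if_pos hc] at h1 ⊢; exact hA h1
      · rw [if_neg hc] at h1 ⊢
        rintro (hx | hx)
        · exact h1 hx
        · exact hz.1 hx

/-- Splitting a walk at the first occurrence of `z` among all-but-last nodes. -/
lemma split_of_not_noNode {z : V} : ∀ {x y : V} (w : Walk G x y), ¬ noNode z w →
    ∃ (w₁ : Walk G x z) (w₂ : Walk G z y),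
      w = w₁.append w₂ ∧ w₂.Nontrivial ∧ w₂.length ≤ w.length
  | _, _, .nil _, hn => absurd trivial hn
  | x, _, .cons s u, hn => by
      by_cases hx : x = z
      · subst hx
        exact ⟨Walk.nil x, Walk.cons s u, rfl, trivial, le_refl _⟩
      · have hu : ¬ noNode z u := by
          intro h; exact hn ⟨hx, h⟩
        obtain ⟨u₁, u₂, he, hnt, hlen⟩ := split_of_not_noNode u hu
        exact ⟨Walk.cons s u₁, u₂, by rw [cons_append, he], hnt,
          le_trans hlen (by rw [length_cons]; omega)⟩

/-- From a μ-connecting walk one rooted at `z` we can extract one with no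
internal occurrence of `z`. -/
lemma exists_muConn_intAvoid {C : Set V} {z δ : V} :
    ∀ (n : ℕ) (w : Walk G z δ), w.length ≤ n → w.MuConn C →
    ∃ w' : Walk G z δ, w'.MuConn C ∧ intAvoid z w' := by
  intro n
  induction n with
  | zero =>
      intro w hl hw
      cases w with
      | nil => exact absurd hw (by simp [MuConn])
      | cons s u => rw [length_cons] at hl; omega
  | succ n ih =>
      intro w hl hw
      cases w with
      | nil => exact absurd hw (by simp [MuConn])
      | cons s u =>
          by_cases ha : noNode z u
          · exact ⟨Walk.cons s u, hw, ha⟩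
          · obtain ⟨u₁, u₂, he, hnt, hlen⟩ := split_of_not_noNode u ha
            rw [muConn_iff] at hw
            obtain ⟨-, hzC, hio, hlast⟩ := hw
            rw [intOK_cons, he, openFrom_append] at hio
            refine ih u₂ ?_ ?_
            · rw [length_cons] at hl; omega
            · rw [muConn_iff]
              refine ⟨hnt, hzC, intOK_of_openFrom u₂ _ hio.2, ?_⟩
              rw [lastHead_cons, he, chainMark_append, chainMark_of_nontrivial u₂ hnt] at hlast
              exact hlast

end Walk
end DMG
namespace DMG

variable {V : Type u}

namespace Walk

lemma badcnt_mapSub {G₁ G₂ : DMG V} (hs : G₁.Sub G₂) {S : Set V} :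
    ∀ {x y : V} (w : Walk G₁ x y) (h : Bool),
    badcnt S h (w.mapSub hs) = badcnt S h w
  | _, _, .nil _, _ => rfl
  | _, _, .cons s w, h => by
      rw [mapSub_cons, badcnt_cons, badcnt_cons, Step.mapSub_headStart, Step.mapSub_headEnd,
        badcnt_mapSub hs w]

variable {G : DMG V} {a b : V}

lemma Fcnt_mapSub (hab : ¬ G.dir a b) :
    ∀ {x y : V} (w : Walk G x y), Fcnt a b (w.mapSub (sub_addDir G a b)) = 0
  | _, _, .nil _ => rfl
  | _, _, .cons s w => by
      rw [mapSub_cons, Fcnt_cons, Fcnt_mapSub hab w]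
      rw [if_neg, Nat.add_zero]
      rintro ⟨hF, rfl, rfl⟩
      cases s with
      | dirF h => exact hab h
      | dirB h => exact hF
      | bid h => exact hF

lemma Bcnt_mapSub (hab : ¬ G.dir a b) :
    ∀ {x y : V} (w : Walk G x y), Bcnt a b (w.mapSub (sub_addDir G a b)) = 0
  | _, _, .nil _ => rfl
  | _, _, .cons s w => by
      rw [mapSub_cons, Bcnt_cons, Bcnt_mapSub hab w]
      rw [if_neg, Nat.add_zero]
      rintro ⟨hF, rfl, rfl⟩
      cases s with
      | dirF h => exact hF
      | dirB h => exact hab h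
      | bid h => exact hF

/-- A walk in `G + (a → b)` traversing the new edge in neither direction comes from `G`. -/
lemma exists_mapSub_eq :
    ∀ {x y : V} (w : Walk (G.addDir a b) x y), Fcnt a b w = 0 → Bcnt a b w = 0 →
    ∃ w' : Walk G x y, w'.mapSub (sub_addDir G a b) = w
  | _, _, .nil x, _, _ => ⟨.nil x, rfl⟩
  | _, _, @Walk.cons _ _ x m _ s w, hF, hB => by
      rw [Fcnt_cons] at hF
      rw [Bcnt_cons] at hB
      obtain ⟨w', hw'⟩ := exists_mapSub_eq w (by omega) (by omega)
      cases s with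
      | dirF h =>
          have hnot : ¬ (x = a ∧ m = b) := by
            intro hc
            rw [if_pos ⟨trivial, hc⟩] at hF
            omega
          have h' := h.resolve_right hnot
          refine ⟨.cons (.dirF h') w', ?_⟩
          rw [mapSub_cons, hw']
          congr 1
      | dirB h =>
          have hnot : ¬ (m = a ∧ x = b) := by
            intro hc
            rw [if_pos ⟨trivial, hc.2, hc.1⟩] at hB
            omega
          have h' := h.resolve_right hnot
          refine ⟨.cons (.dirB h') w', ?_⟩
          rw [mapSub_cons, hw']
          congr 1
      | bid h =>
          refine ⟨.cons (.bid h) w', ?_⟩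
          rw [mapSub_cons, hw']
          rfl

end Walk

variable {G : DMG V} {a b : V}

lemma anc_addDir_iff {x c : V} :
    (G.addDir a b).anc x c ↔ G.anc x c ∨ (G.anc x a ∧ G.anc b c) := by
  constructor
  · intro h
    induction h using Relation.ReflTransGen.head_induction_on with
    | refl => exact Or.inl Relation.ReflTransGen.refl
    | head hxy hyc ih =>
        rcases hxy with hxy | ⟨rfl, rfl⟩
        · rcases ih with h | ⟨h1, h2⟩
          · exact Or.inl (Relation.ReflTransGen.head hxy h)
          · exact Or.inr ⟨Relation.ReflTransGen.head hxy h1, h2⟩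
        · rcases ih with h | ⟨h1, h2⟩
          · exact Or.inr ⟨Relation.ReflTransGen.refl, h⟩
          · exact Or.inr ⟨Relation.ReflTransGen.refl, h2⟩
  · rintro (h | ⟨h1, h2⟩)
    · exact anc_mono (sub_addDir G a b) h
    · exact Relation.ReflTransGen.trans (anc_mono (sub_addDir G a b) h1)
        (Relation.ReflTransGen.head (Or.inr ⟨rfl, rfl⟩) (anc_mono (sub_addDir G a b) h2))

lemma anSet_addDir_iff {C : Set V} {x : V} :
    x ∈ (G.addDir a b).anSet C ↔ x ∈ G.anSet C ∨ (G.anc x a ∧ b ∈ G.anSet C) := by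
  constructor
  · rintro ⟨c, hc, h⟩
    rcases anc_addDir_iff.1 h with h | ⟨h1, h2⟩
    · exact Or.inl ⟨c, hc, h⟩
    · exact Or.inr ⟨h1, ⟨c, hc, h2⟩⟩
  · rintro (⟨c, hc, h⟩ | ⟨h1, c, hc, h2⟩)
    · exact ⟨c, hc, anc_addDir_iff.2 (Or.inl h)⟩
    · exact ⟨c, hc, anc_addDir_iff.2 (Or.inr ⟨h1, h2⟩)⟩

/-- Construction of a descending directed walk from `x` down to `a`,
open for any conditioning mark. -/
lemma exists_down {C : Set V} {x : V} (hxa : G.anc x a) (hx : x ∉ G.anSet C) :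
    ∃ d : Walk G x a, d.firstHead = false ∧ Walk.chainMark true d = true ∧
      (∀ (A : Set V) (h : Bool), Walk.openFrom C A h d) ∧
      (∀ (S : Set V) (h : Bool), Walk.badcnt S h d = 0) := by
  induction hxa using Relation.ReflTransGen.head_induction_on with
  | refl =>
      exact ⟨.nil a, rfl, rfl, fun A h => trivial, fun S h => rfl⟩
  | @head x y hxy hya ih =>
      have hy : y ∉ G.anSet C := by
        rintro ⟨c, hc, h⟩
        exact hx ⟨c, hc, Relation.ReflTransGen.head hxy h⟩
      obtain ⟨d, h1, h2, h3, h4⟩ := ih hy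
      refine ⟨.cons (.dirF hxy) d, rfl, ?_, ?_, ?_⟩
      · rw [Walk.chainMark_cons]; exact h2
      · intro A h
        rw [Walk.openFrom_cons]
        refine ⟨?_, h3 A _⟩
        rw [if_neg]
        · exact fun hC => hx (subset_anSet hC)
        · simp
      · intro S h
        rw [Walk.badcnt_cons, h4 S _, if_neg, Nat.add_zero]
        rintro ⟨hc, -⟩
        simp at hc

/-- Construction of an ascending directed walk from `a` up to `x`. -/
lemma exists_up {C : Set V} {x : V} (hxa : G.anc x a) (hx : x ∉ G.anSet C) :
    ∃ u : Walk G a x, Walk.chainMark false u = false ∧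
      (∀ A : Set V, Walk.openFrom C A false u) ∧
      (∀ S : Set V, Walk.badcnt S false u = 0) ∧
      (∀ S : Set V, Walk.badW S u = 0) := by
  induction hxa using Relation.ReflTransGen.head_induction_on with
  | refl =>
      exact ⟨.nil a, rfl, fun A => trivial, fun S => rfl, fun S => rfl⟩
  | @head x y hxy hya ih =>
      have hy : y ∉ G.anSet C := by
        rintro ⟨c, hc, h⟩
        exact hx ⟨c, hc, Relation.ReflTransGen.head hxy h⟩
      obtain ⟨u, h1, h2, h3, h4⟩ := ih hy
      refine ⟨u.append (.cons (.dirB hxy) (.nil _)), ?_, ?_, ?_, ?_⟩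
      · rw [Walk.chainMark_append, h1, Walk.chainMark_cons]; rfl
      · intro A
        rw [Walk.openFrom_append, h1]
        refine ⟨h2 A, ?_⟩
        rw [Walk.openFrom_cons]
        refine ⟨?_, trivial⟩
        rw [if_neg]
        · exact fun hC => hy (subset_anSet hC)
        · simp
      · intro S
        rw [Walk.badcnt_append, h3, h1, Walk.badcnt_cons, if_neg, Walk.badcnt_nil]
        rintro ⟨hc, -⟩
        simp at hc
      · intro S
        cases u with
        | nil => rfl
        | cons r u' =>
            rw [Walk.cons_append, Walk.badW_cons, Walk.badcnt_append]
            have hbw := h4 S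
            rw [Walk.badW_cons] at hbw
            rw [hbw]
            have hcm : Walk.chainMark r.headEnd u' = false := h1
            rw [hcm, Walk.badcnt_cons, if_neg, Walk.badcnt_nil]
            rintro ⟨hc, -⟩
            simp at hc

end DMG
namespace DMG
namespace Walk

variable {V : Type u} {G : DMG V} {a b : V}

/-- Split a walk at a forward traversal of the new edge. -/
lemma splitF : ∀ {x y : V} (w : Walk (G.addDir a b) x y), 1 ≤ Fcnt a b w →
    ∃ (w₁ : Walk (G.addDir a b) x a) (w₂ : Walk (G.addDir a b) b y),
      w = w₁.append (.cons (.dirF (addDir_dir_new G a b)) w₂) ∧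
      Fcnt a b w = Fcnt a b w₁ + Fcnt a b w₂ + 1 ∧
      Bcnt a b w = Bcnt a b w₁ + Bcnt a b w₂
  | _, _, .nil _, h => by simp at h
  | _, _, @Walk.cons _ _ x m _ s u, h => by
      by_cases hc : s.IsDirF ∧ x = a ∧ m = b
      all_goals rw [Fcnt_cons] at h
      · obtain ⟨hF, rfl, rfl⟩ := hc
        cases s with
        | dirF e =>
            refine ⟨.nil _, u, ?_, ?_, ?_⟩
            · rw [nil_append]
            · rw [Fcnt_cons, Fcnt_nil, if_pos ⟨trivial, rfl, rfl⟩]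
              omega
            · rw [Bcnt_cons, Bcnt_nil, if_neg]
              rintro ⟨hB, -⟩
              exact hB
        | dirB e => exact absurd hF (by simp [Step.IsDirF])
        | bid e => exact absurd hF (by simp [Step.IsDirF])
      · rw [if_neg hc, Nat.zero_add] at h
        obtain ⟨u₁, u₂, he, hF, hB⟩ := splitF u h
        refine ⟨.cons s u₁, u₂, by rw [cons_append, he], ?_, ?_⟩
        · rw [Fcnt_cons, Fcnt_cons, hF]; omega
        · rw [Bcnt_cons, Bcnt_cons, hB]; omega

/-- Split a walk at a backward traversal of the new edge. -/
lemma splitB : ∀ {x y : V} (w : Walk (G.addDir a b) x y), 1 ≤ Bcnt a b w →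
    ∃ (w₁ : Walk (G.addDir a b) x b) (w₂ : Walk (G.addDir a b) a y),
      w = w₁.append (.cons (.dirB (addDir_dir_new G a b)) w₂) ∧
      Bcnt a b w = Bcnt a b w₁ + Bcnt a b w₂ + 1 ∧
      Fcnt a b w = Fcnt a b w₁ + Fcnt a b w₂
  | _, _, .nil _, h => by simp at h
  | _, _, @Walk.cons _ _ x m _ s u, h => by
      by_cases hc : s.IsDirB ∧ x = b ∧ m = a
      all_goals rw [Bcnt_cons] at h
      · obtain ⟨hB, rfl, rfl⟩ := hc
        cases s with
        | dirB e =>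
            refine ⟨.nil _, u, ?_, ?_, ?_⟩
            · rw [nil_append]
            · rw [Bcnt_cons, Bcnt_nil, if_pos ⟨trivial, rfl, rfl⟩]
              omega
            · rw [Fcnt_cons, Fcnt_nil, if_neg]
              rintro ⟨hF, -⟩
              exact hF
        | dirF e => exact absurd hB (by simp [Step.IsDirB])
        | bid e => exact absurd hB (by simp [Step.IsDirB])
      · rw [if_neg hc, Nat.zero_add] at h
        obtain ⟨u₁, u₂, he, hB, hF⟩ := splitB u h
        refine ⟨.cons s u₁, u₂, by rw [cons_append, he], ?_, ?_⟩
        · rw [Bcnt_cons, Bcnt_cons, hB]; omega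
        · rw [Fcnt_cons, Fcnt_cons, hF]; omega

lemma splitBadAux {S : Set V} : ∀ {x y : V} (h : Bool) (u : Walk G x y), 1 ≤ badcnt S h u →
    ∃ (m : V) (u₁ : Walk G x m) (u₂ : Walk G m y),
      u = u₁.append u₂ ∧ u₂.Nontrivial ∧ chainMark h u₁ = true ∧ u₂.firstHead = true ∧
      m ∉ S ∧ badcnt S h u = badcnt S h u₁ + 1 + badW S u₂ ∧
      Fcnt a b u = Fcnt a b u₁ + Fcnt a b u₂ ∧ Bcnt a b u = Bcnt a b u₁ + Bcnt a b u₂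
  | _, _, _, .nil _, h => by simp at h
  | x, y, h, .cons t v, hcnt => by
      rw [badcnt_cons] at hcnt
      by_cases hc : (h && t.headStart) = true ∧ x ∉ S
      · refine ⟨x, .nil x, .cons t v, rfl, trivial, ?_, ?_, hc.2, ?_, ?_, ?_⟩
        · rw [chainMark_nil]
          have h1 := hc.1
          rw [Bool.and_eq_true] at h1
          exact h1.1
        · rw [firstHead_cons]
          have h1 := hc.1
          rw [Bool.and_eq_true] at h1
          exact h1.2
        · rw [badcnt_cons, badcnt_nil, if_pos hc, badW_cons]
        · simp
        · simp
      · rw [if_neg hc, Nat.zero_add] at hcnt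
        obtain ⟨m, v₁, v₂, he, hnt, hcm, hfh, hmS, hbeq, hFeq, hBeq⟩ :=
          splitBadAux t.headEnd v hcnt
        refine ⟨m, .cons t v₁, v₂, by rw [cons_append, he], hnt, ?_, hfh, hmS, ?_, ?_, ?_⟩
        · rw [chainMark_cons]; exact hcm
        · rw [badcnt_cons, badcnt_cons, if_neg hc, hbeq]; omega
        · rw [Fcnt_cons, Fcnt_cons, hFeq]; omega
        · rw [Bcnt_cons, Bcnt_cons, hBeq]; omega

/-- Split a walk at a collider instance outside `S`. -/
lemma splitBad {S : Set V} {x y : V} (w : Walk G x y) (h : 1 ≤ badW S w) :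
    ∃ (m : V) (w₁ : Walk G x m) (w₂ : Walk G m y),
      w = w₁.append w₂ ∧ w₁.Nontrivial ∧ w₂.Nontrivial ∧
      w₁.lastHead = true ∧ w₂.firstHead = true ∧ m ∉ S ∧
      badW S w = badW S w₁ + 1 + badW S w₂ ∧
      Fcnt a b w = Fcnt a b w₁ + Fcnt a b w₂ ∧ Bcnt a b w = Bcnt a b w₁ + Bcnt a b w₂ := by
  cases w with
  | nil => simp at h
  | cons s u =>
      rw [badW_cons] at h
      obtain ⟨m, u₁, u₂, he, hnt, hcm, hfh, hmS, hbeq, hFeq, hBeq⟩ := splitBadAux s.headEnd u h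
      refine ⟨m, .cons s u₁, u₂, by rw [cons_append, he], trivial, hnt, ?_, hfh, hmS, ?_, ?_, ?_⟩
      · rw [lastHead_cons]; exact hcm
      · rw [badW_cons, badW_cons, hbeq]
      · rw [Fcnt_cons, Fcnt_cons, hFeq]; omega
      · rw [Bcnt_cons, Bcnt_cons, hBeq]; omega

end Walk
end DMG
namespace DMG

variable {V : Type u}

namespace Walk

variable {G : DMG V} {a b : V}

lemma intOK_insert {C A A' : Set V} {z : V} (hA : A ⊆ A') {x y : V} (w : Walk G x y)
    (hw : intOK C A w) (hz : intAvoid z w) : intOK (C ∪ {z}) A' w := by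
  cases w with
  | nil => trivial
  | cons s u => exact openFrom_insert hA u _ hw hz

lemma nontrivial_mapSub' {G₁ G₂ : DMG V} (hs : G₁.Sub G₂) {x y : V} (w : Walk G₁ x y) :
    w.Nontrivial ↔ (mapSub hs w).Nontrivial :=
  ⟨nontrivial_mapSub hs w, nontrivial_of_mapSub hs w⟩

/-- Lift `openFrom` of a `G`-walk to `G.addDir a b`, with head conditions. -/
lemma openFrom_lift_of_intOK {C : Set V} {p q : V} (v : Walk G p q) (h : Bool)
    (hv : intOK C (G.anSet C) v)
    (h1 : (h && v.firstHead) = true → p ∈ (G.addDir a b).anSet C)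
    (h2 : ¬ (h && v.firstHead) = true → p ∉ C) :
    openFrom C ((G.addDir a b).anSet C) h (v.mapSub (sub_addDir G a b)) := by
  refine openFrom_of_intOK _ h ?_ ?_ ?_
  · exact intOK_mono (anSet_mono (sub_addDir G a b)) _ ((intOK_mapSub _ _).2 hv)
  · rw [firstHead_mapSub]; exact h1
  · rw [firstHead_mapSub]; exact h2

lemma badW_mapSub {G₁ G₂ : DMG V} (hs : G₁.Sub G₂) {S : Set V} {x y : V} (w : Walk G₁ x y) :
    badW S (w.mapSub hs) = badW S w := by
  cases w with
  | nil => rfl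
  | cons s u => rw [mapSub_cons, badW_cons, Step.mapSub_headEnd, badcnt_mapSub, badW_cons]

lemma badW_lift_zero {C : Set V} {p q : V} (v : Walk G p q)
    (hv : intOK C (G.anSet C) v) :
    badW (G.anSet C) (v.mapSub (sub_addDir G a b)) = 0 := by
  cases v with
  | nil => rfl
  | cons s u =>
      rw [mapSub_cons, badW_cons, Step.mapSub_headEnd, badcnt_mapSub]
      exact badcnt_zero_of_openFrom u _ hv

end Walk

section Main

open Walk

variable {G : DMG V} {a b : V}

/-- Facts from a μ-connecting walk of `G` extracted from its `MuConn`. -/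
lemma muConn_parts {C : Set V} {x y : V} {w : Walk G x y} (hw : w.MuConn C) :
    w.Nontrivial ∧ x ∉ C ∧ intOK C (G.anSet C) w ∧ w.lastHead = true :=
  (muConn_iff w).1 hw

theorem main_claim (hab : ¬ G.dir a b) (hp : G.PotPar a b) :
    ∀ (nB nbad nF : ℕ) (C : Set V) (γ δ : V) (w : Walk (G.addDir a b) γ δ),
      Walk.Bcnt a b w ≤ nB → Walk.badW (G.anSet C) w ≤ nbad → Walk.Fcnt a b w ≤ nF →
      w.MuConn C → ¬ G.muSep {γ} {δ} C := by
  have hsub := sub_addDir G a b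
  have hp1 : ∀ (C : Set V), a ∉ C → ¬ G.muSep {a} {b} C := fun C hC hs => hp.1 ⟨C, hC, hs⟩
  intro nB
  induction nB using Nat.strong_induction_on with
  | _ nB ihB =>
  intro nbad
  induction nbad using Nat.strong_induction_on with
  | _ nbad ihbad =>
  intro nF
  induction nF using Nat.strong_induction_on with
  | _ nF ihF =>
  intro C γ δ w hB hbad hF hw
  by_cases hB1 : 1 ≤ Walk.Bcnt a b w
  · -- a backward traversal of the new edge exists
    by_cases hab2 : a = b
    · -- loopB: delete a backward traversal of the new loop
      subst hab2
      obtain ⟨w₁, w₂, he, hBeq, hFeq⟩ := splitB w hB1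
      subst he
      obtain ⟨hnt, hγC, hint, hlast⟩ := muConn_parts hw
      rw [lastHead_append, chainMark_cons] at hlast
      simp only [Step.headEnd_dirB] at hlast
      rw [← lastHead_eq_chainMark w₂ false] at hlast
      cases w₂ with
      | nil => simp at hlast
      | cons t v =>
      cases w₁ with
      | nil =>
          rw [nil_append] at hB hF hBeq hFeq hint
          rw [Bcnt_nil] at hBeq
          rw [intOK_cons] at hint
          simp only [Step.headEnd_dirB] at hint
          have haC : a ∉ C := head_not_mem_of_openFrom hint (by simp)
          refine ihB (nB - 1) (by omega) _ _ C a δ (Walk.cons t v) (by omega) le_rfl le_rfl ?_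
          exact (muConn_iff _).2 ⟨nontrivial_cons _ _, hγC,
            intOK_of_openFrom _ _ hint, hlast⟩
      | cons s₁ u₁ =>
          rw [intOK_append_left _ _ (nontrivial_cons _ _)] at hint
          obtain ⟨hint1, hof⟩ := hint
          have hof2 : openFrom C ((G.addDir a a).anSet C) false (Walk.cons t v) := by
            have := ((openFrom_cons _ _ _).1 hof).2
            simpa using this
          have haC : a ∉ C := head_not_mem_of_openFrom hof2 (by simp)
          refine ihB (nB - 1) (by omega) _ _ C γ δ
            ((Walk.cons s₁ u₁).append (Walk.cons t v)) ?_ le_rfl le_rfl ?_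
          · rw [Bcnt_append]
            omega
          · refine (muConn_iff _).2 ⟨nontrivial_append_left _ _ (nontrivial_cons _ _),
              hγC, ?_, ?_⟩
            · rw [intOK_append_left _ _ (nontrivial_cons _ _)]
              refine ⟨hint1, ?_⟩
              refine openFrom_of_intOK _ _ (intOK_of_openFrom _ _ hof2) ?_ ?_
              · intro hc
                rw [Bool.and_eq_true] at hc
                refine head_mem_of_openFrom hof ?_
                rw [hc.1]
                rfl
              · exact fun _ => haC
            · rw [lastHead_append, chainMark_of_nontrivial _ (nontrivial_cons t v)]
              exact hlast
    · -- T4: eliminate a backward traversal of the new edge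
      obtain ⟨w₁, w₂, he, hBeq, hFeq⟩ := splitB w hB1
      subst he
      obtain ⟨hnt, hγC, hint, hlast⟩ := muConn_parts hw
      rw [lastHead_append, chainMark_cons] at hlast
      simp only [Step.headEnd_dirB] at hlast
      rw [← lastHead_eq_chainMark w₂ false] at hlast
      cases w₂ with
      | nil => simp at hlast
      | cons t v =>
      have hof2 : openFrom C ((G.addDir a b).anSet C) false (Walk.cons t v) := by
        cases w₁ with
        | nil =>
            rw [nil_append, intOK_cons] at hint
            simpa using hint
        | cons s₁ u₁ =>
            rw [intOK_append_left _ _ (nontrivial_cons _ _)] at hint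
            have := ((openFrom_cons _ _ _).1 hint.2).2
            simpa using this
      have haC : a ∉ C := head_not_mem_of_openFrom hof2 (by simp)
      have hw₂ : Walk.MuConn C (Walk.cons t v) :=
        (muConn_iff _).2 ⟨nontrivial_cons _ _, haC, intOK_of_openFrom _ _ hof2, hlast⟩
      have hαδ : ¬ G.muSep {a} {δ} C :=
        ihB (nB - 1) (by omega) _ _ C a δ (Walk.cons t v) (by omega) le_rfl le_rfl hw₂
      obtain ⟨τ₀, hτ₀⟩ := muSep_singleton_not_iff.1 hαδ
      obtain ⟨τ, hτ, hτav⟩ := exists_muConn_intAvoid τ₀.length τ₀ le_rfl hτ₀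
      obtain ⟨hτnt, -, hτint, hτlast⟩ := muConn_parts hτ
      obtain ⟨ρ₀, hρ₀⟩ := muSep_singleton_not_iff.1 (hp1 C haC)
      obtain ⟨ρ, hρ, hρav⟩ := exists_muConn_intAvoid ρ₀.length ρ₀ le_rfl hρ₀
      obtain ⟨hρnt, -, hρint, hρlast⟩ := muConn_parts hρ
      have hρrnt : ρ.reverse.Nontrivial := nontrivial_reverse ρ hρnt
      have hρrint : intOK C (G.anSet C) ρ.reverse := (intOK_reverse ρ).2 hρint
      have hρrfirst : ρ.reverse.firstHead = true := by rw [firstHead_reverse, hρlast]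
      by_cases hstuck : (ρ.reverse.lastHead && τ.firstHead) = true ∧
          a ∉ (G.addDir a b).anSet C
      · -- stuck case: go through the p4 property
        obtain ⟨hfg, haAp⟩ := hstuck
        have hbS' : b ∉ (G.addDir a b).anSet C := by
          intro hbAp
          rcases anSet_addDir_iff.1 hbAp with hbS | ⟨-, hbS⟩ <;>
            exact haAp (anSet_addDir_iff.2 (Or.inr ⟨Relation.ReflTransGen.refl, hbS⟩))
        have hbC : b ∉ C := by
          cases w₁ with
          | nil => exact hγC
          | cons s₁ u₁ =>
              rw [intOK_append_left _ _ (nontrivial_cons _ _)] at hint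
              by_cases h₁ : (Walk.cons s₁ u₁).lastHead = true
              · exact absurd (head_mem_of_openFrom hint.2 (by rw [h₁]; rfl)) hbS'
              · exact head_not_mem_of_openFrom hint.2
                  (by simp only [Step.headStart_dirB, Bool.and_true]; exact h₁)
        have hπ : Walk.MuConn (C ∪ {a}) (ρ.reverse.append τ) := by
          refine (muConn_iff _).2 ⟨nontrivial_append_left _ _ hρrnt, ?_, ?_, ?_⟩
          · rintro (h | h)
            · exact hbC h
            · exact hab2 ((Set.mem_singleton_iff.1 h).symm)
          · rw [intOK_append_left _ _ hρrnt]
            refine ⟨intOK_insert (anSet_mono_set Set.subset_union_left) _ hρrint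
              ((intAvoid_reverse ρ).2 hρav), ?_⟩
            refine openFrom_of_intOK _ _ (intOK_insert
              (anSet_mono_set Set.subset_union_left) _ hτint hτav) ?_ ?_
            · exact fun _ => subset_anSet (Set.mem_union_right _ rfl)
            · exact fun hc => absurd hfg hc
          · rw [lastHead_append, chainMark_of_nontrivial τ hτnt]
            exact hτlast
        have hκ : ¬ G.muSep {b} {δ} C := fun hs =>
          (muSep_singleton_not_iff.2 ⟨_, hπ⟩) (hp.2.2.2 δ C haC hs)
        cases w₁ with
        | nil => exact hκ
        | cons s₁ u₁ =>
            rw [intOK_append_left _ _ (nontrivial_cons _ _)] at hint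
            have h₁ : (Walk.cons s₁ u₁).lastHead = false := by
              by_contra h
              rw [Bool.not_eq_false] at h
              exact absurd (head_mem_of_openFrom hint.2 (by rw [h]; rfl)) hbS'
            obtain ⟨κ, hκc⟩ := muSep_singleton_not_iff.1 hκ
            obtain ⟨hκnt, -, hκint, hκlast⟩ := muConn_parts hκc
            refine ihB (nB - 1) (by omega) _ _ C γ δ
              ((Walk.cons s₁ u₁).append (κ.mapSub hsub)) ?_ le_rfl le_rfl ?_
            · rw [Bcnt_append, Bcnt_mapSub hab]
              omega
            · refine (muConn_iff _).2 ⟨nontrivial_append_left _ _ (nontrivial_cons _ _),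
                hγC, ?_, ?_⟩
              · rw [intOK_append_left _ _ (nontrivial_cons _ _)]
                refine ⟨hint.1, openFrom_lift_of_intOK κ _ hκint ?_ (fun _ => hbC)⟩
                intro hc
                rw [h₁] at hc
                exact absurd hc (by simp)
              · rw [lastHead_append, chainMark_mapSub,
                  chainMark_of_nontrivial κ hκnt, hκlast]
      · -- non-stuck case: splice in reversed ρ and τ
        have hres : (ρ.reverse.lastHead && τ.firstHead) = true →
            a ∈ (G.addDir a b).anSet C :=
          fun hP => not_not.1 (fun hQ => hstuck ⟨hP, hQ⟩)
        have hofτ : openFrom C ((G.addDir a b).anSet C) ρ.reverse.lastHead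
            (τ.mapSub hsub) :=
          openFrom_lift_of_intOK τ _ hτint hres (fun _ => haC)
        have hofτ' : openFrom C ((G.addDir a b).anSet C)
            (chainMark ρ.reverse.lastHead (ρ.reverse.mapSub hsub)) (τ.mapSub hsub) := by
          rw [chainMark_mapSub, chainMark_of_nontrivial ρ.reverse hρrnt]
          exact hofτ
        have hlastΩ : ((ρ.reverse.mapSub hsub).append (τ.mapSub hsub)).lastHead = true := by
          rw [lastHead_append, chainMark_mapSub, chainMark_of_nontrivial τ hτnt, hτlast]
        cases w₁ with
        | nil =>
            refine ihB (nB - 1) (by omega) _ _ C b δ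
              ((ρ.reverse.mapSub hsub).append (τ.mapSub hsub)) ?_ le_rfl le_rfl ?_
            · rw [Bcnt_append, Bcnt_mapSub hab, Bcnt_mapSub hab]
              omega
            · refine (muConn_iff _).2 ⟨nontrivial_append_left _ _
                (nontrivial_mapSub hsub _ hρrnt), hγC, ?_, hlastΩ⟩
              rw [intOK_append_left _ _ (nontrivial_mapSub hsub _ hρrnt)]
              refine ⟨intOK_mono (anSet_mono hsub) _ ((intOK_mapSub hsub _).2 hρrint), ?_⟩
              rw [lastHead_mapSub]
              exact hofτ
        | cons s₁ u₁ =>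
            rw [intOK_append_left _ _ (nontrivial_cons _ _)] at hint
            refine ihB (nB - 1) (by omega) _ _ C γ δ
              ((Walk.cons s₁ u₁).append
                ((ρ.reverse.mapSub hsub).append (τ.mapSub hsub))) ?_ le_rfl le_rfl ?_
            · rw [Bcnt_append, Bcnt_append, Bcnt_mapSub hab, Bcnt_mapSub hab]
              omega
            · refine (muConn_iff _).2 ⟨nontrivial_append_left _ _ (nontrivial_cons _ _),
                hγC, ?_, ?_⟩
              · rw [intOK_append_left _ _ (nontrivial_cons _ _)]
                refine ⟨hint.1, ?_⟩
                rw [openFrom_append]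
                refine ⟨?_, ?_⟩
                · refine openFrom_lift_of_intOK ρ.reverse _ hρrint ?_ ?_
                  · intro hc
                    rw [Bool.and_eq_true, hρrfirst] at hc
                    exact head_mem_of_openFrom hint.2 (by rw [hc.1]; rfl)
                  · intro hc
                    rw [hρrfirst, Bool.and_true] at hc
                    exact head_not_mem_of_openFrom hint.2
                      (by simp only [Step.headStart_dirB, Bool.and_true]; exact hc)
                · rw [chainMark_mapSub, chainMark_of_nontrivial ρ.reverse hρrnt]
                  exact hofτ
              · rw [lastHead_append, chainMark_of_nontrivial _
                  (nontrivial_append_left _ _ (nontrivial_mapSub hsub _ hρrnt))]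
                exact hlastΩ
  · by_cases hbad1 : 1 ≤ Walk.badW (G.anSet C) w
    · by_cases hab2 : a = b
      · -- a bad collider is impossible when the new edge is a loop
        exfalso
        subst hab2
        obtain ⟨m, wl, wr, he, hntl, hntr, hll, hfr, hmS, hbeq, hFe, hBe⟩ :=
          splitBad (a := a) (b := a) (S := G.anSet C) w hbad1
        subst he
        obtain ⟨-, -, hint, -⟩ := muConn_parts hw
        rw [intOK_append_left _ _ hntl] at hint
        have hof := hint.2
        rw [hll] at hof
        cases wr with
        | nil => exact hntr
        | cons t v =>
            have hmAp : m ∈ (G.addDir a a).anSet C := by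
              refine head_mem_of_openFrom hof ?_
              rw [firstHead_cons] at hfr
              rw [hfr]
              rfl
            rcases anSet_addDir_iff.1 hmAp with hmS' | ⟨hma, c, hc, hac⟩
            · exact hmS hmS'
            · exact hmS ⟨c, hc, Relation.ReflTransGen.trans hma hac⟩
      · -- T1': eliminate a collider outside the ancestor set of C in G
        obtain ⟨m, wl, wr, he, hntl, hntr, hll, hfr, hmS, hbeq, hFe, hBe⟩ :=
          splitBad (a := a) (b := b) (S := G.anSet C) w hbad1
        subst he
        obtain ⟨hnt, hγC, hint, hlast⟩ := muConn_parts hw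
        rw [intOK_append_left _ _ hntl] at hint
        obtain ⟨hintl, hofr⟩ := hint
        rw [hll] at hofr
        rw [lastHead_append, chainMark_of_nontrivial wr hntr] at hlast
        cases wr with
        | nil => exact hntr.elim
        | cons t v =>
        rw [firstHead_cons] at hfr
        have hmAp : m ∈ (G.addDir a b).anSet C :=
          head_mem_of_openFrom hofr (by rw [hfr]; rfl)
        obtain ⟨hma, hbS⟩ : G.anc m a ∧ b ∈ G.anSet C := by
          rcases anSet_addDir_iff.1 hmAp with h | h
          · exact absurd h hmS
          · exact h
        have haC : a ∉ C := fun h => hmS ⟨a, h, hma⟩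
        have hmC : m ∉ C := fun h => hmS (subset_anSet h)
        obtain ⟨d, hd1, hd2, hd3, hd4⟩ := exists_down (C := C) hma hmS
        obtain ⟨uu, hu1, hu2, hu3, hu4⟩ := exists_up (C := C) hma hmS
        have hγa : ¬ G.muSep {γ} {a} C := by
          refine ihbad (nbad - 1) (by omega) _ C γ a (wl.append (d.mapSub hsub)) ?_ ?_ le_rfl ?_
          · rw [Bcnt_append, Bcnt_mapSub hab]
            omega
          · rw [badW_append_left _ _ hntl, hll, badcnt_mapSub, hd4]
            omega
          · refine (muConn_iff _).2 ⟨nontrivial_append_left _ _ hntl, hγC, ?_, ?_⟩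
            · rw [intOK_append_left _ _ hntl, hll]
              exact ⟨hintl, (openFrom_mapSub hsub d _).2 (hd3 _ _)⟩
            · rw [lastHead_append, hll, chainMark_mapSub, hd2]
        have hγb : ¬ G.muSep {γ} {b} C := fun hs => hγa (hp.2.1 γ C haC hs)
        obtain ⟨σ, hσ⟩ := muSep_singleton_not_iff.1 hγb
        obtain ⟨hσnt, -, hσint, hσlast⟩ := muConn_parts hσ
        have hαδ : ¬ G.muSep {a} {δ} C := by
          cases uu with
          | nil =>
              refine ihbad (nbad - 1) (by omega) _ C a δ (Walk.cons t v) (by omega) (by omega)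
                le_rfl ?_
              exact (muConn_iff _).2 ⟨nontrivial_cons _ _, hmC,
                intOK_of_openFrom _ _ hofr, hlast⟩
          | cons r u' =>
              refine ihbad (nbad - 1) (by omega) _ C a δ
                (((Walk.cons r u').mapSub hsub).append (Walk.cons t v)) ?_ ?_ le_rfl ?_
              · rw [Bcnt_append, Bcnt_mapSub hab]
                omega
              · rw [badW_append_left _ _ (nontrivial_mapSub hsub _ (nontrivial_cons _ _)),
                  badW_mapSub, lastHead_mapSub, lastHead_eq_chainMark _ false, hu1, hu4,
                  badcnt_cons, if_neg (by simp), badW_cons] at *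
                omega
              · refine (muConn_iff _).2 ⟨nontrivial_append_left _ _
                  (nontrivial_mapSub hsub _ (nontrivial_cons _ _)), haC, ?_, ?_⟩
                · rw [intOK_append_left _ _ (nontrivial_mapSub hsub _ (nontrivial_cons _ _))]
                  refine ⟨intOK_mono (anSet_mono hsub) _ ((intOK_mapSub hsub _).2
                    (intOK_of_openFrom _ _ (hu2 (G.anSet C)))), ?_⟩
                  rw [lastHead_mapSub, lastHead_eq_chainMark _ false, hu1]
                  refine openFrom_of_intOK _ _ (intOK_of_openFrom _ _ hofr) ?_ ?_
                  · intro hc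
                    exact absurd hc (by simp)
                  · exact fun _ => hmC
                · rw [lastHead_append, chainMark_of_nontrivial _ (nontrivial_cons t v)]
                  exact hlast
        obtain ⟨τ₀, hτ₀⟩ := muSep_singleton_not_iff.1 hαδ
        obtain ⟨τ, hτ, hτav⟩ := exists_muConn_intAvoid τ₀.length τ₀ le_rfl hτ₀
        obtain ⟨hτnt, -, hτint, hτlast⟩ := muConn_parts hτ
        obtain ⟨ρ₀, hρ₀⟩ := muSep_singleton_not_iff.1 (hp1 C haC)
        obtain ⟨ρ, hρ, hρav⟩ := exists_muConn_intAvoid ρ₀.length ρ₀ le_rfl hρ₀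
        obtain ⟨hρnt, -, hρint, hρlast⟩ := muConn_parts hρ
        have hρrnt := nontrivial_reverse ρ hρnt
        have hρrint : intOK C (G.anSet C) ρ.reverse := (intOK_reverse ρ).2 hρint
        have hρrfirst : ρ.reverse.firstHead = true := by rw [firstHead_reverse, hρlast]
        by_cases hstuck : (ρ.reverse.lastHead && τ.firstHead) = true ∧ a ∉ G.anSet C
        · obtain ⟨hfg, haS⟩ := hstuck
          by_cases hbC : b ∈ C
          · intro hsep
            rcases hp.2.2.1 γ δ C haC hbC hsep with hs | hs
            · exact hγb hs
            · exact hαδ hs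
          · have hπ : Walk.MuConn (C ∪ {a}) (ρ.reverse.append τ) := by
              refine (muConn_iff _).2 ⟨nontrivial_append_left _ _ hρrnt, ?_, ?_, ?_⟩
              · rintro (h | h)
                · exact hbC h
                · exact hab2 ((Set.mem_singleton_iff.1 h).symm)
              · rw [intOK_append_left _ _ hρrnt]
                refine ⟨intOK_insert (anSet_mono_set Set.subset_union_left) _ hρrint
                  ((intAvoid_reverse ρ).2 hρav), ?_⟩
                refine openFrom_of_intOK _ _ (intOK_insert
                  (anSet_mono_set Set.subset_union_left) _ hτint hτav) ?_ ?_
                · exact fun _ => subset_anSet (Set.mem_union_right _ rfl)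
                · exact fun hc => absurd hfg hc
              · rw [lastHead_append, chainMark_of_nontrivial τ hτnt]
                exact hτlast
            have hκ : ¬ G.muSep {b} {δ} C := fun hs =>
              (muSep_singleton_not_iff.2 ⟨_, hπ⟩) (hp.2.2.2 δ C haC hs)
            obtain ⟨κ, hκc⟩ := muSep_singleton_not_iff.1 hκ
            obtain ⟨hκnt, -, hκint, hκlast⟩ := muConn_parts hκc
            refine muSep_singleton_not_iff.2 ⟨σ.append κ, (muConn_iff _).2
              ⟨nontrivial_append_left _ _ hσnt, hγC, ?_, ?_⟩⟩
            · rw [intOK_append_left _ _ hσnt]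
              exact ⟨hσint, openFrom_of_intOK _ _ hκint (fun _ => hbS) (fun _ => hbC)⟩
            · rw [lastHead_append, chainMark_of_nontrivial κ hκnt]
              exact hκlast
        · -- non-stuck: compose γ ⇝ b, reversed ρ, and τ, all within G
          have hres : (ρ.reverse.lastHead && τ.firstHead) = true → a ∈ G.anSet C :=
            fun hP => not_not.1 (fun hQ => hstuck ⟨hP, hQ⟩)
          refine muSep_singleton_not_iff.2 ⟨σ.append (ρ.reverse.append τ), (muConn_iff _).2
            ⟨nontrivial_append_left _ _ hσnt, hγC, ?_, ?_⟩⟩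
          · rw [intOK_append_left _ _ hσnt, hσlast]
            refine ⟨hσint, ?_⟩
            rw [openFrom_append]
            constructor
            · refine openFrom_of_intOK _ _ hρrint (fun _ => hbS) ?_
              intro hc
              exact absurd (by rw [hρrfirst]; rfl) hc
            · rw [chainMark_of_nontrivial _ hρrnt]
              exact openFrom_of_intOK _ _ hτint hres (fun _ => haC)
          · rw [lastHead_append, chainMark_of_nontrivial _ (nontrivial_append_left _ _ hρrnt),
              lastHead_append, chainMark_of_nontrivial τ hτnt]
            exact hτlast
    · by_cases hF1 : 1 ≤ Walk.Fcnt a b w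
      · -- T2/T3: eliminate a forward traversal of the new edge
        obtain ⟨w₁, w₂, he, hFeq, hBeq⟩ := splitF w hF1
        subst he
        have hbw : Walk.badW (G.anSet C) (w₁.append (.cons (.dirF (addDir_dir_new G a b)) w₂))
            = 0 := by omega
        obtain ⟨hnt, hγC, hint, hlast⟩ := muConn_parts hw
        cases w₁ with
        | nil =>
            rw [nil_append] at hw hB hF hFeq hBeq hbw hint hlast
            rw [Fcnt_nil] at hFeq
            rw [Bcnt_nil] at hBeq
            rw [intOK_cons] at hint
            rw [lastHead_cons] at hlast
            rw [badW_cons] at hbw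
            simp only [Step.headEnd_dirF] at hint hlast hbw
            obtain ⟨ρ, hρ⟩ := muSep_singleton_not_iff.1 (hp1 C hγC)
            obtain ⟨hρnt, -, hρint, hρlast⟩ := muConn_parts hρ
            refine ihF (nF - 1) (by omega) C a δ ((ρ.mapSub hsub).append w₂) ?_ ?_ ?_ ?_
            · rw [Bcnt_append, Bcnt_mapSub hab]
              omega
            · rw [badW_append_left _ _ (nontrivial_mapSub hsub ρ hρnt),
                badW_lift_zero ρ hρint, lastHead_mapSub, hρlast, hbw]
              omega
            · rw [Fcnt_append, Fcnt_mapSub hab]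
              omega
            · refine (muConn_iff _).2 ⟨nontrivial_append_left _ _
                (nontrivial_mapSub hsub ρ hρnt), hγC, ?_, ?_⟩
              · rw [intOK_append_left _ _ (nontrivial_mapSub hsub ρ hρnt)]
                refine ⟨intOK_mono (anSet_mono hsub) _ ((intOK_mapSub hsub ρ).2 hρint), ?_⟩
                rw [lastHead_mapSub, hρlast]
                exact hint
              · rw [lastHead_append, lastHead_mapSub, hρlast]
                exact hlast
        | cons s₁ u₁ =>
            rw [intOK_append_left _ _ (nontrivial_cons _ _)] at hint
            obtain ⟨hint1, hof⟩ := hint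
            have haC : a ∉ C := head_not_mem_of_openFrom hof (by simp)
            have hof2 : openFrom C ((G.addDir a b).anSet C) true w₂ := by
              have := ((openFrom_cons _ _ _).1 hof).2
              simpa using this
            rw [lastHead_append, chainMark_cons] at hlast
            simp only [Step.headEnd_dirF] at hlast
            rw [badW_append_left _ _ (nontrivial_cons _ _), badcnt_cons] at hbw
            rw [Step.headStart_dirF, Bool.and_false] at hbw
            rw [if_neg (by simp), Nat.zero_add] at hbw
            simp only [Step.headEnd_dirF] at hbw
            have hbw1 : Walk.badW (G.anSet C) (Walk.cons s₁ u₁) = 0 := by omega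
            have hbw2 : Walk.badcnt (G.anSet C) true w₂ = 0 := by omega
            obtain ⟨ρ, hρ⟩ := muSep_singleton_not_iff.1 (hp1 C haC)
            obtain ⟨hρnt, -, hρint, hρlast⟩ := muConn_parts hρ
            by_cases hT3 : ((Walk.cons s₁ u₁).lastHead && ρ.firstHead) = true
            · -- T3
              have hl₁ : (Walk.cons s₁ u₁).lastHead = true := by
                rw [Bool.and_eq_true] at hT3
                exact hT3.1
              have hγa : ¬ G.muSep {γ} {a} C := by
                refine ihF (nF - 1) (by omega) C γ a (Walk.cons s₁ u₁) (by omega) (by omega)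
                  (by omega) ?_
                exact (muConn_iff _).2 ⟨nontrivial_cons _ _, hγC, hint1, hl₁⟩
              have hγb : ¬ G.muSep {γ} {b} C := fun hs => hγa (hp.2.1 γ C haC hs)
              obtain ⟨σ, hσ⟩ := muSep_singleton_not_iff.1 hγb
              obtain ⟨hσnt, -, hσint, hσlast⟩ := muConn_parts hσ
              refine ihF (nF - 1) (by omega) C γ δ ((σ.mapSub hsub).append w₂) ?_ ?_ ?_ ?_
              · rw [Bcnt_append, Bcnt_mapSub hab]
                omega
              · rw [badW_append_left _ _ (nontrivial_mapSub hsub σ hσnt),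
                  badW_lift_zero σ hσint, lastHead_mapSub, hσlast, hbw2]
                omega
              · rw [Fcnt_append, Fcnt_mapSub hab]
                omega
              · refine (muConn_iff _).2 ⟨nontrivial_append_left _ _
                  (nontrivial_mapSub hsub σ hσnt), hγC, ?_, ?_⟩
                · rw [intOK_append_left _ _ (nontrivial_mapSub hsub σ hσnt)]
                  refine ⟨intOK_mono (anSet_mono hsub) _ ((intOK_mapSub hsub σ).2 hσint), ?_⟩
                  rw [lastHead_mapSub, hσlast]
                  exact hof2
                · rw [lastHead_append, lastHead_mapSub, hσlast]
                  exact hlast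
            · -- T2
              refine ihF (nF - 1) (by omega) C γ δ
                ((Walk.cons s₁ u₁).append ((ρ.mapSub hsub).append w₂)) ?_ ?_ ?_ ?_
              · rw [Bcnt_append, Bcnt_append, Bcnt_mapSub hab]
                omega
              · rw [badW_append_left _ _ (nontrivial_cons _ _), badcnt_append, badcnt_mapSub,
                  chainMark_mapSub, chainMark_of_nontrivial ρ hρnt, hρlast]
                have hz : Walk.badcnt (G.anSet C) (Walk.cons s₁ u₁).lastHead ρ = 0 :=
                  badcnt_zero_of_openFrom ρ _ (openFrom_of_intOK ρ _ hρint
                    (fun hc => absurd hc hT3) (fun _ => haC))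
                omega
              · rw [Fcnt_append, Fcnt_append, Fcnt_mapSub hab]
                omega
              · refine (muConn_iff _).2 ⟨nontrivial_append_left _ _ (nontrivial_cons _ _),
                  hγC, ?_, ?_⟩
                · rw [intOK_append_left _ _ (nontrivial_cons _ _)]
                  refine ⟨hint1, ?_⟩
                  rw [openFrom_append]
                  refine ⟨openFrom_lift_of_intOK ρ _ hρint (fun hc => absurd hc hT3)
                    (fun _ => haC), ?_⟩
                  rw [chainMark_mapSub, chainMark_of_nontrivial ρ hρnt, hρlast]
                  exact hof2
                · rw [lastHead_append, chainMark_append, chainMark_mapSub,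
                    chainMark_of_nontrivial ρ hρnt, hρlast]
                  exact hlast
      · -- base case: the walk lives in G
        obtain ⟨w', hw'⟩ := exists_mapSub_eq w (by omega) (by omega)
        rw [← hw'] at hw hbad1
        obtain ⟨h1, h2, h3, h4⟩ := muConn_parts hw
        refine muSep_singleton_not_iff.2 ⟨w', (muConn_iff w').2
          ⟨nontrivial_of_mapSub hsub _ h1, h2, ?_, by rwa [lastHead_mapSub] at h4⟩⟩
        have h3' := (intOK_mapSub hsub w').1 h3
        cases w' with
        | nil => trivial
        | cons s u =>
            rw [intOK_cons] at h3' ⊢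
            refine openFrom_switch u _ h3' ?_
            rw [mapSub_cons, badW_cons, Step.mapSub_headEnd, badcnt_mapSub] at hbad1
            omega

end Main
end DMG

/-- Lemma 2: if `a` is a potential parent of `b` in
`I(G)`, then adding the directed edge `a → b` yields a Markov equivalent
graph: `I(G⁺) = I(G)`. -/
theorem stmt15 {V : Type u} [Fintype V] (G : DMG V) (a b : V)
    (h : G.PotPar a b) :
    DMG.MarkovEq (G.addDir a b) G := by
  intro A B C
  constructor
  · intro hs
    exact DMG.muSep_mono (DMG.sub_addDir G a b) hs
  · intro hs
    by_cases hab : G.dir a b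
    · refine DMG.muSep_mono ?_ hs
      refine ⟨fun x y hxy => ?_, fun _ _ hb => hb⟩
      rcases hxy with hxy | ⟨rfl, rfl⟩
      · exact hxy
      · exact hab
    · intro γ δ hγ hδ w hw
      have hsep : G.muSep {γ} {δ} C := by
        rintro p q rfl rfl w' hw'
        exact hs hγ hδ w' hw'
      exact DMG.main_claim hab h _ _ _ C γ δ w le_rfl le_rfl le_rfl hw hsep
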